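/- arXiv:1601.03083 — 6 statements merged into one kernel-verified Lean document; each statement's English description precedes it below -/
import Mathlib

section
/- Given a set X of (k-1)(d+1)+1 points in R^d, there exists a partition of X into k parts A_1,...,A_k such that the intersection of the convex hulls of the parts is nonempty. -/
open scoped RealInnerProductSpace Classical

open Finset Module

lemma mem_convexHull_range_iff' {n : ℕ} {E : Type*} [AddCommGroup E] [Module ℝ E]
    (c : Fin n → E) (x : E) :
    x ∈ convexHull ℝ (Set.range c) ↔
      ∃ w : Fin n → ℝ, (∀ i, 0 ≤ w i) ∧ ∑ i, w i = 1 ∧ ∑ i, w i • c i = x := by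
  rw [convexHull_range_eq_exists_affineCombination]
  constructor
  · rintro ⟨s, w, h0, h1, rfl⟩
    refine ⟨fun i => if i ∈ s then w i else 0, fun i => ?_, ?_, ?_⟩
    · by_cases h : i ∈ s <;> simp_all [h0]
    · rw [Finset.sum_ite_mem, Finset.univ_inter, h1]
    · rw [affineCombination_eq_linear_combination s c w h1]
      simp only [ite_smul, zero_smul]
      rw [Finset.sum_ite_mem, Finset.univ_inter]
  · rintro ⟨w, h0, h1, rfl⟩
    exact ⟨Finset.univ, w, fun i _ => h0 i, h1,
      by rw [affineCombination_eq_linear_combination _ _ _ h1]⟩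

lemma norm_combo_sq {E : Type*} [NormedAddCommGroup E] [InnerProductSpace ℝ E]
    (p b : E) (t : ℝ) :
    ‖(1-t)•p + t•b‖^2 = (1-t)^2*‖p‖^2 + 2*(t*(1-t))*⟪p,b⟫ + t^2*‖b‖^2 := by
  rw [norm_add_sq_real, norm_smul, norm_smul, real_inner_smul_left, real_inner_smul_right,
    Real.norm_eq_abs, Real.norm_eq_abs, mul_pow, mul_pow, sq_abs, sq_abs]
  ring

theorem colorful_caratheodory {E : Type*} [NormedAddCommGroup E] [InnerProductSpace ℝ E]
    [FiniteDimensional ℝ E] {n k : ℕ} (hn : n = finrank ℝ E + 1) (hk : 0 < k)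
    (f : Fin n → Fin k → E) (hf : ∀ j, (0:E) ∈ convexHull ℝ (Set.range (f j))) :
    ∃ g : Fin n → Fin k, (0:E) ∈ convexHull ℝ (Set.range (fun j => f j (g j))) := by
  have hn1 : 1 ≤ n := by omega
  haveI : Nonempty (Fin n) := ⟨⟨0, by omega⟩⟩
  haveI : Nonempty (Fin k) := ⟨⟨0, hk⟩⟩
  set D : (Fin n → Fin k) → ℝ :=
    fun g => Metric.infDist 0 (convexHull ℝ (Set.range fun j => f j (g j))) with hD
  have hcomp : ∀ g : Fin n → Fin k,
      IsCompact (convexHull ℝ (Set.range fun j => f j (g j))) :=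
    fun g => (Set.finite_range _).isCompact_convexHull ℝ
  have hne : ∀ g : Fin n → Fin k,
      (convexHull ℝ (Set.range fun j => f j (g j))).Nonempty :=
    fun g => (Set.range_nonempty _).mono (subset_convexHull ℝ _)
  obtain ⟨g, -, hgmin⟩ := Finset.exists_min_image Finset.univ D Finset.univ_nonempty
  obtain ⟨p, hp_mem, hp_dist⟩ := (hcomp g).exists_infDist_eq_dist (hne g) 0
  by_cases hp0 : p = 0
  · exact ⟨g, hp0 ▸ hp_mem⟩
  exfalso
  set c : Fin n → E := fun j => f j (g j) with hc
  -- variational inequality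
  have hvar : ∀ q ∈ convexHull ℝ (Set.range c), ‖p‖^2 ≤ ⟪p, q⟫ := by
    intro q hq
    by_contra hlt
    push_neg at hlt
    have hqp : q ≠ p := by
      intro h; rw [h, real_inner_self_eq_norm_sq] at hlt; linarith
    have hqp2 : (0:ℝ) < ‖q - p‖^2 := pow_pos (norm_pos_iff.2 (sub_ne_zero.2 hqp)) 2
    set ε : ℝ := ‖p‖^2 - ⟪p, q⟫ with hε
    have hε0 : 0 < ε := by simp [hε]; linarith
    set t : ℝ := min 1 (ε / ‖q - p‖^2) with ht
    have ht0 : 0 < t := lt_min one_pos (div_pos hε0 hqp2)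
    have ht1 : t ≤ 1 := min_le_left _ _
    have htε : t * ‖q - p‖^2 ≤ ε := by
      rw [← le_div_iff₀ hqp2]; exact min_le_right _ _
    have hz_mem : (1 - t) • p + t • q ∈ convexHull ℝ (Set.range c) :=
      (convex_convexHull ℝ _) hp_mem hq (by linarith) (le_of_lt ht0) (by ring)
    have hge : ‖p‖ ≤ ‖(1 - t) • p + t • q‖ := by
      have := Metric.infDist_le_dist_of_mem hz_mem (x := (0:E))
      rw [hp_dist] at this
      simpa [dist_zero_left] using this
    have hexp : ‖(1 - t) • p + t • q‖^2 = ‖p‖^2 + 2*t*(⟪p,q⟫ - ‖p‖^2) + t^2*‖q - p‖^2 := by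
      have h1 : (1 - t) • p + t • q = p + t • (q - p) := by
        rw [smul_sub]; module
      rw [h1, norm_add_sq_real, real_inner_smul_right, norm_smul, inner_sub_right,
        real_inner_self_eq_norm_sq, mul_pow, Real.norm_eq_abs, sq_abs]
      ring
    nlinarith [sq_nonneg ‖p‖, norm_nonneg p, norm_nonneg ((1-t)•p + t•q), hge,
      mul_le_mul_of_nonneg_left htε (le_of_lt ht0)]
  obtain ⟨w, hw0, hw1, hwp⟩ := (mem_convexHull_range_iff' c p).1 hp_mem
  have key : ∃ (j₀ : Fin n) (w' : Fin n → ℝ), w' j₀ = 0 ∧ (∀ i, 0 ≤ w' i) ∧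
      ∑ i, w' i = 1 ∧ ∑ i, w' i • c i = p := by
    by_cases hjz : ∃ j, w j = 0
    · obtain ⟨j₀, hj₀⟩ := hjz; exact ⟨j₀, w, hj₀, hw0, hw1, hwp⟩
    push_neg at hjz
    have hwpos : ∀ j, 0 < w j := fun j => (hw0 j).lt_of_ne (Ne.symm (hjz j))
    have hplane : ∀ j, ⟪p, c j⟫ = ‖p‖^2 := by
      have hge : ∀ j, ‖p‖^2 ≤ ⟪p, c j⟫ := fun j =>
        hvar _ (subset_convexHull ℝ _ (Set.mem_range_self j))
    -- sum of nonneg terms equals zero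
      have hsum : ∑ j, w j * (⟪p, c j⟫ - ‖p‖^2) = 0 := by
        have h2 : ∑ j, w j * ⟪p, c j⟫ = ‖p‖^2 := by
          have h4 := congrArg (fun x : E => ⟪p, x⟫) hwp
          simp only [inner_sum, real_inner_smul_right] at h4
          rw [real_inner_self_eq_norm_sq] at h4
          exact h4
        have h2 : ‖p‖^2 = ∑ j, w j * ⟪p, c j⟫ := h2.symm
        have h3 : ∑ j, w j * (⟪p, c j⟫ - ‖p‖^2) =
            (∑ j, w j * ⟪p, c j⟫) - (∑ j, w j) * ‖p‖^2 := by
          rw [Finset.sum_mul, ← Finset.sum_sub_distrib]; exact Finset.sum_congr rfl (fun j _ => by ring)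
        rw [h3, hw1, ← h2]; ring
      intro j
      have := (Finset.sum_eq_zero_iff_of_nonneg (fun j _ =>
        mul_nonneg (hw0 j) (by linarith [hge j]))).1 hsum j (Finset.mem_univ j)
      have hne0 : w j ≠ 0 := hjz j
      have : ⟪p, c j⟫ - ‖p‖^2 = 0 := by
        rcases mul_eq_zero.1 this with h | h
        · exact absurd h hne0
        · exact h
      linarith [this]
    have hdep : ¬ AffineIndependent ℝ c := by
      intro hind
      have hN : 0 < finrank ℝ E := by
        rcases Nat.eq_zero_or_pos (finrank ℝ E) with h | h
        · exact absurd (finrank_zero_iff_forall_zero.1 h p) hp0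
        · exact h
      have hcard : Fintype.card (Fin n) = finrank ℝ E + 1 := by simp [hn]
      have hrank := hind.finrank_vectorSpan hcard
      have hle : vectorSpan ℝ (Set.range c) ≤ (ℝ ∙ p)ᗮ := by
        rw [vectorSpan_def, Submodule.span_le]
        intro v hv
        rw [Set.mem_vsub] at hv
        obtain ⟨a, ⟨ja, rfl⟩, b, ⟨jb, rfl⟩, rfl⟩ := hv
        rw [SetLike.mem_coe, Submodule.mem_orthogonal_singleton_iff_inner_right]
        simp [vsub_eq_sub, inner_sub_right, hplane]
      haveI : Fact (finrank ℝ E = (finrank ℝ E - 1) + 1) := ⟨by omega⟩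
      have hortho := Submodule.finrank_orthogonal_span_singleton (𝕜 := ℝ) (n := finrank ℝ E - 1) hp0
      have hmono := Submodule.finrank_mono hle
      omega
    rw [affineIndependent_iff] at hdep
    push_neg at hdep
    obtain ⟨s, μ, hμsum, hμcomb, e, hes, hμe⟩ := hdep
    have hν : ∃ ν : Fin n → ℝ, (∑ j, ν j = 0) ∧ (∑ j, ν j • c j = 0) ∧ ∃ j, 0 < ν j := by
      set ν : Fin n → ℝ := fun j => if j ∈ s then μ j else 0 with hνdef
      have hνsum : ∑ j, ν j = 0 := by
        rw [hνdef, Finset.sum_ite_mem, Finset.univ_inter, hμsum]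
      have hνcomb : ∑ j, ν j • c j = 0 := by
        simp only [hνdef, ite_smul, zero_smul]
        rw [Finset.sum_ite_mem, Finset.univ_inter, hμcomb]
      have hνe : ν e ≠ 0 := by simp [hνdef, hes, hμe]
      rcases lt_or_gt_of_ne hνe with h | h
      · refine ⟨-ν, by simp [hνsum], by simp [hνcomb], e, by simpa using h⟩
      · exact ⟨ν, hνsum, hνcomb, e, h⟩
    obtain ⟨ν, hνsum, hνcomb, j₁, hj₁⟩ := hν
    set T := Finset.univ.filter (fun j => 0 < ν j) with hT
    obtain ⟨j₀, hj₀T, hj₀min⟩ := T.exists_min_image (fun j => w j / ν j)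
      ⟨j₁, by simp [hT, hj₁]⟩
    have hνj₀ : 0 < ν j₀ := by simpa [hT] using hj₀T
    set t := w j₀ / ν j₀ with htdef
    have ht0 : 0 < t := div_pos (hwpos j₀) hνj₀
    refine ⟨j₀, fun j => w j - t * ν j, ?_, ?_, ?_, ?_⟩
    · show w j₀ - t * ν j₀ = 0
      rw [htdef]; field_simp; ring
    · intro j
      show 0 ≤ w j - t * ν j
      by_cases hνj : 0 < ν j
      · have h := hj₀min j (by simp [hT, hνj])
        have := (le_div_iff₀ hνj).1 h
        linarith
      · push_neg at hνj
        have : t * ν j ≤ 0 := mul_nonpos_of_nonneg_of_nonpos ht0.le hνj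
        linarith [hw0 j]
    · rw [Finset.sum_sub_distrib, ← Finset.mul_sum, hνsum, hw1]; ring
    · simp only [sub_smul, Finset.sum_sub_distrib, mul_smul, ← Finset.smul_sum,
        hνcomb, hwp, smul_zero, sub_zero]
  obtain ⟨j₀, w', hw'j₀, hw'0, hw'1, hw'p⟩ := key
  obtain ⟨μ, hμ0, hμ1, hμc⟩ := (mem_convexHull_range_iff' (f j₀) 0).1 (hf j₀)
  have hib : ∃ i₀, ⟪p, f j₀ i₀⟫ ≤ 0 := by
    by_contra hall
    push_neg at hall
    have h1 : ∑ i, μ i * ⟪p, f j₀ i⟫ = 0 := by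
      have : ⟪p, ∑ i, μ i • f j₀ i⟫ = 0 := by rw [hμc, inner_zero_right]
      rw [inner_sum] at this
      simpa [real_inner_smul_right] using this
    obtain ⟨i', -, hi'⟩ := Finset.exists_ne_zero_of_sum_ne_zero (by rw [hμ1]; exact one_ne_zero)
    have : 0 < ∑ i, μ i * ⟪p, f j₀ i⟫ :=
      Finset.sum_pos' (fun i _ => mul_nonneg (hμ0 i) (hall i).le)
        ⟨i', Finset.mem_univ _, mul_pos ((hμ0 i').lt_of_ne (Ne.symm hi')) (hall i')⟩
    linarith
  obtain ⟨i₀, hi₀⟩ := hib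
  set b := f j₀ i₀ with hb
  set g' := Function.update g j₀ i₀ with hg'
  set c' : Fin n → E := fun j => f j (g' j) with hc'
  have hc'j₀ : c' j₀ = b := by simp [hc', hg', hb]
  have hc'ne : ∀ j, j ≠ j₀ → c' j = c j := by
    intro j hj; simp [hc', hg', hc, Function.update_of_ne hj]
  have hp_mem' : p ∈ convexHull ℝ (Set.range c') := by
    rw [mem_convexHull_range_iff']
    refine ⟨w', hw'0, hw'1, ?_⟩
    rw [← hw'p]
    refine Finset.sum_congr rfl (fun j _ => ?_)
    by_cases hj : j = j₀
    · subst hj; rw [hw'j₀]; simp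
    · rw [hc'ne j hj]
  have hb_mem' : b ∈ convexHull ℝ (Set.range c') := subset_convexHull ℝ _ ⟨j₀, hc'j₀⟩
  have hP : 0 < ‖p‖^2 := pow_pos (norm_pos_iff.2 hp0) 2
  have hB : (0:ℝ) ≤ ‖b‖^2 := sq_nonneg _
  set P := ‖p‖^2 with hPdef
  set B := ‖b‖^2 with hBdef
  set t := P / (P + B) with htdef
  have hPB : 0 < P + B := by linarith
  have htpos : 0 < t := div_pos hP hPB
  have ht1 : t ≤ 1 := by rw [htdef, div_le_one hPB]; linarith
  have hz : (1-t)•p + t•b ∈ convexHull ℝ (Set.range c') :=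
    (convex_convexHull ℝ _) hp_mem' hb_mem' (by linarith) htpos.le (by ring)
  have hle : D g' ≤ ‖(1-t)•p + t•b‖ := by
    have := Metric.infDist_le_dist_of_mem hz (x := (0:E))
    simpa [hD, dist_zero_left] using this
  have htPB : t * (P + B) = P := div_mul_cancel₀ _ (ne_of_gt hPB)
  have hexp : ‖(1-t)•p + t•b‖^2 = (1-t)^2*P + 2*(t*(1-t))*⟪p,b⟫ + t^2*B :=
    norm_combo_sq p b t
  have hzlt : ‖(1-t)•p + t•b‖ < ‖p‖ := by
    have h2 : 2*(t*(1-t))*⟪p,b⟫ ≤ 0 :=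
      mul_nonpos_of_nonneg_of_nonpos (by nlinarith) hi₀
    have htB : t * B = P * (1-t) := by linear_combination htPB
    have heq : (1-t)^2*P + t^2*B = P - t*P := by linear_combination t*htB
    have hsq : ‖(1-t)•p + t•b‖^2 < P := by
      rw [hexp]
      have hub : (1-t)^2*P + 2*(t*(1-t))*⟪p,b⟫ + t^2*B ≤ (1-t)^2*P + t^2*B := by linarith
      have := mul_pos htpos hP
      linarith
    rw [hPdef] at hsq
    exact lt_of_pow_lt_pow_left₀ 2 (norm_nonneg p) hsq
  have hmin := hgmin g' (Finset.mem_univ g')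
  have hDg : D g = ‖p‖ := by
    have h6 : D g = dist 0 p := hp_dist
    rw [h6, dist_zero_left]
  rw [hDg] at hmin
  have : D g' ≤ D g' := le_refl _
  linarith [hle, hzlt, hmin]


lemma euclid_sum_apply {ι κ : Type*} [Fintype κ] (s : Finset ι)
    (f : ι → EuclideanSpace ℝ κ) (t : κ) :
    (∑ i ∈ s, f i) t = ∑ i ∈ s, f i t := by
  induction s using Finset.cons_induction with
  | empty => rfl
  | cons a s ha ih => rw [Finset.sum_cons, Finset.sum_cons, ← ih]; rfl

/-- Tverberg's theorem: any `(k-1)(d+1)+1` points in `ℝ^d` can be partitioned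
into `k` parts whose convex hulls have a common point. -/
theorem tverberg (d k : ℕ) (hk : 0 < k)
    (X : Finset (EuclideanSpace ℝ (Fin d)))
    (hX : X.card = (k - 1) * (d + 1) + 1) :
    ∃ A : Fin k → Finset (EuclideanSpace ℝ (Fin d)),
      (∀ i j, i ≠ j → Disjoint (A i) (A j)) ∧
      (Finset.univ.biUnion A = X) ∧
      (⋂ i, convexHull ℝ (A i : Set (EuclideanSpace ℝ (Fin d)))).Nonempty := by
  classical
  set n := (k - 1) * (d + 1) + 1 with hn
  -- enumerate the points of X
  set e : Fin n ≃ {a // a ∈ X} := (finCongr hX.symm).trans X.equivFin.symm with hedef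
  set x : Fin n → EuclideanSpace ℝ (Fin d) :=
    fun j => (e j : EuclideanSpace ℝ (Fin d)) with hxdef
  have hxinj : Function.Injective x := fun a b h =>
    e.injective (Subtype.ext h)
  have hxmem : ∀ j, x j ∈ X := fun j => (e j).2
  have hxsurj : ∀ a ∈ X, ∃ j, x j = a := fun a ha =>
    ⟨e.symm ⟨a, ha⟩, by simp [hxdef]⟩
  -- lifted points in ℝ^{d+1}
  set q : Fin n → Fin (d+1) → ℝ :=
    fun j s => if h : (s:ℕ) < d then x j ⟨s, h⟩ else 1 with hqdef
  have hqlast : ∀ j, q j (Fin.last d) = 1 := fun j => by simp [hqdef]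
  have hqup : ∀ j (t : Fin d), q j (Fin.castSucc t) = x j t := fun j t => by
    simp [hqdef]
  -- simplex vectors in ℝ^{k-1} summing to zero
  set v : Fin k → Fin (k-1) → ℝ :=
    fun i r => (if (i:ℕ) = (r:ℕ) then 1 else 0) - (if (i:ℕ) = k-1 then 1 else 0) with hvdef
  have hone : ∀ (m:ℕ) (hm : m < k) (z : Fin k → ℝ),
      ∑ i : Fin k, (if (i:ℕ) = m then (1:ℝ) else 0) * z i = z ⟨m, hm⟩ := by
    intro m hm z
    rw [Finset.sum_eq_single_of_mem ⟨m, hm⟩ (Finset.mem_univ _)]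
    · simp
    · intro b _ hb; rw [if_neg (fun h => hb (Fin.ext h)), zero_mul]
  have hvsum : ∀ r : Fin (k-1), ∑ i, v i r = 0 := by
    intro r
    have h1 := hone (r:ℕ) (by have := r.isLt; omega) (fun _ => 1)
    have h2 := hone (k-1) (by omega) (fun _ => 1)
    simp only [mul_one] at h1 h2
    simp only [hvdef, Finset.sum_sub_distrib, h1, h2, sub_self]
  -- tensor points
  set F : Fin n → Fin k → EuclideanSpace ℝ (Fin (k-1) × Fin (d+1)) :=
    fun j i => WithLp.toLp 2 (fun rs : Fin (k-1) × Fin (d+1) => v i rs.1 * q j rs.2) with hFdef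
  have hF0 : ∀ j, (0 : EuclideanSpace ℝ (Fin (k-1) × Fin (d+1))) ∈
      convexHull ℝ (Set.range (F j)) := by
    intro j
    rw [mem_convexHull_range_iff']
    refine ⟨fun _ => 1/k, fun _ => by positivity, ?_, ?_⟩
    · rw [Finset.sum_const, Finset.card_univ, Fintype.card_fin, nsmul_eq_mul]
      field_simp
    · ext rs
      have h1 : (∑ i, ((1:ℝ)/k) • F j i) rs = ∑ i, (1/k) * (v i rs.1 * q j rs.2) := by
        rw [euclid_sum_apply]
        exact Finset.sum_congr rfl (fun i _ => rfl)
      have h2 : ∑ i, ((1:ℝ)/k) * (v i rs.1 * q j rs.2)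
          = (1/k) * ((∑ i, v i rs.1) * q j rs.2) := by
        rw [← Finset.mul_sum, ← Finset.sum_mul]
      show (∑ i, ((1:ℝ)/k) • F j i) rs = 0
      rw [h1, h2, hvsum rs.1, zero_mul, mul_zero]
  -- colorful Caratheodory
  have hdim : n = finrank ℝ (EuclideanSpace ℝ (Fin (k-1) × Fin (d+1))) + 1 := by
    simp [hn]
  obtain ⟨g, hg⟩ := colorful_caratheodory hdim hk F hF0
  obtain ⟨l, hl0, hl1, hltensor⟩ := (mem_convexHull_range_iff' _ _).1 hg
  -- coordinates of the tensor identity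
  have hcoord : ∀ (r : Fin (k-1)) (s : Fin (d+1)),
      ∑ j, l j * (v (g j) r * q j s) = 0 := by
    intro r s
    have h := congrArg
      (fun z : EuclideanSpace ℝ (Fin (k-1) × Fin (d+1)) => z (r, s)) hltensor
    have h2 : (∑ j, l j • F j (g j)) (r, s) = ∑ j, (l j • F j (g j)) (r, s) :=
      euclid_sum_apply _ _ _
    exact (h2.symm.trans h : ∑ j, l j * (v (g j) r * q j s) = 0)
  -- partial sums per color
  set y : Fin k → Fin (d+1) → ℝ :=
    fun i s => ∑ j, (if g j = i then l j else 0) * q j s with hydef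
  have hy0 : ∀ (r : Fin (k-1)) (s : Fin (d+1)), ∑ i, v i r * y i s = 0 := by
    intro r s
    rw [← hcoord r s]
    calc ∑ i, v i r * y i s
        = ∑ i, ∑ j, v i r * ((if g j = i then l j else 0) * q j s) := by
          refine Finset.sum_congr rfl (fun i _ => ?_)
          rw [hydef, Finset.mul_sum]
      _ = ∑ j, ∑ i, v i r * ((if g j = i then l j else 0) * q j s) := Finset.sum_comm
      _ = ∑ j, l j * (v (g j) r * q j s) := by
          refine Finset.sum_congr rfl (fun j _ => ?_)
          rw [Finset.sum_eq_single_of_mem (g j) (Finset.mem_univ _)]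
          · rw [if_pos rfl]; ring
          · intro b _ hb; rw [if_neg (Ne.symm hb), zero_mul, mul_zero]
  set ik : Fin k := ⟨k-1, by omega⟩ with hik
  have hyeq : ∀ i s, y i s = y ik s := by
    have hstep : ∀ (r : Fin (k-1)) (s : Fin (d+1)),
        y ⟨(r:ℕ), by have := r.isLt; omega⟩ s = y ik s := by
      intro r s
      have h := hy0 r s
      have hexp : ∑ i, v i r * y i s
          = y ⟨(r:ℕ), by have := r.isLt; omega⟩ s - y ik s := by
        have h1 := hone (r:ℕ) (by have := r.isLt; omega) (fun i => y i s)
        have h2 := hone (k-1) (by omega) (fun i => y i s)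
        simp only [hvdef, sub_mul, Finset.sum_sub_distrib, h1, h2]
        rfl
      rw [hexp] at h
      linarith
    intro i s
    by_cases hikk : (i:ℕ) = k-1
    · have : i = ik := Fin.ext (by simp [hik, hikk])
      rw [this]
    · have hlt : (i:ℕ) < k-1 := by have := i.isLt; omega
      have := hstep ⟨(i:ℕ), hlt⟩ s
      simpa using this
  -- the common value of the (d+1)-st coordinates is 1/k
  have hylast : ∀ i, y i (Fin.last d) = 1/k := by
    have hsum : ∑ i, y i (Fin.last d) = 1 := by
      calc ∑ i, y i (Fin.last d)
          = ∑ j, ∑ i, (if g j = i then l j else 0) * q j (Fin.last d) :=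
            Finset.sum_comm
        _ = ∑ j, l j := by
            refine Finset.sum_congr rfl (fun j _ => ?_)
            rw [Finset.sum_eq_single_of_mem (g j) (Finset.mem_univ _)]
            · rw [if_pos rfl, hqlast, mul_one]
            · intro b _ hb; rw [if_neg (Ne.symm hb), zero_mul]
        _ = 1 := hl1
    have hconst : ∑ i : Fin k, y i (Fin.last d) = k * y ik (Fin.last d) := by
      rw [Finset.sum_congr rfl (fun i _ => hyeq i (Fin.last d)), Finset.sum_const,
        Finset.card_univ, Fintype.card_fin, nsmul_eq_mul]
    intro i
    rw [hyeq i (Fin.last d)]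
    rw [hconst] at hsum
    field_simp
    linarith [hsum]
  -- define the partition
  set A : Fin k → Finset (EuclideanSpace ℝ (Fin d)) :=
    fun i => (Finset.univ.filter (fun j => g j = i)).image x with hAdef
  have hsigma : ∀ i, ∑ j ∈ Finset.univ.filter (fun j => g j = i), l j = 1/k := by
    intro i
    rw [Finset.sum_filter]
    have : ∑ j, (if g j = i then l j else 0) = y i (Fin.last d) := by
      rw [hydef]
      exact Finset.sum_congr rfl (fun j _ => by rw [hqlast, mul_one])
    rw [this, hylast i]
  refine ⟨A, ?_, ?_, ?_⟩
  · intro i i' hii'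
    rw [Finset.disjoint_left]
    intro a hai hai'
    simp only [hAdef, Finset.mem_image, Finset.mem_filter, Finset.mem_univ, true_and] at hai hai'
    obtain ⟨j, hji, rfl⟩ := hai
    obtain ⟨j', hj'i, hjj'⟩ := hai'
    exact hii' (by rw [← hji, ← hj'i, hxinj hjj'])
  · ext a
    simp only [Finset.mem_biUnion, Finset.mem_univ, true_and, hAdef, Finset.mem_image,
      Finset.mem_filter]
    constructor
    · rintro ⟨i, j, -, rfl⟩; exact hxmem j
    · intro ha
      obtain ⟨j, rfl⟩ := hxsurj a ha
      exact ⟨g j, j, rfl, rfl⟩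
  · set z : EuclideanSpace ℝ (Fin d) :=
      WithLp.toLp 2 (fun t => k * y ik (Fin.castSucc t)) with hzdef
    refine ⟨z, Set.mem_iInter.2 (fun i => ?_)⟩
    set T := Finset.univ.filter (fun j => g j = i) with hT
    have hTpos : 0 < ∑ j ∈ T, l j := by
      rw [hT, hsigma i]; positivity
    have hmemA : ∀ j ∈ T, x j ∈ (A i : Set (EuclideanSpace ℝ (Fin d))) := fun j hj =>
      Finset.mem_coe.2 (Finset.mem_image_of_mem x hj)
    have hcm := T.centerMass_mem_convexHull (fun j _ => hl0 j) hTpos hmemA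
    have hcmz : T.centerMass l x = z := by
      have hTsum : ∑ j ∈ T, l j = 1/k := by rw [hT]; exact hsigma i
      have hcoords : ∀ t : Fin d,
          (∑ j ∈ T, l j • x j) t = y i (Fin.castSucc t) := by
        intro t
        rw [euclid_sum_apply]
        calc ∑ j ∈ T, (l j • x j) t
            = ∑ j, (if g j = i then l j else 0) * x j t := by
              rw [hT, Finset.sum_filter]
              refine Finset.sum_congr rfl (fun j _ => ?_)
              by_cases hgj : g j = i <;> simp [hgj]
          _ = y i (Fin.castSucc t) := by
              rw [hydef]
              exact Finset.sum_congr rfl (fun j _ => by rw [hqup])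
      ext t
      have happ : (T.centerMass l x) t
          = (∑ j ∈ T, l j)⁻¹ * (∑ j ∈ T, l j • x j) t := rfl
      rw [happ, hTsum, hcoords t, hyeq i (Fin.castSucc t)]
      show ((1:ℝ)/k)⁻¹ * y ik (Fin.castSucc t) = k * y ik (Fin.castSucc t)
      rw [one_div, inv_inv]
    rw [hcmz] at hcm
    exact hcm
end

section
/- For any finite set X of points in R^d, there exists a point p in R^d such that every closed half-space containing p contains at least |X|/(d+1) points of X. -/
open Finset Module

lemma common_point {d : ℕ} (X : Finset (EuclideanSpace ℝ (Fin d)))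
    (I : Finset (Finset (EuclideanSpace ℝ (Fin d)))) (hne : I.Nonempty)
    (hIs : ∀ A ∈ I, A ⊆ X ∧ d * X.card < (d+1) * A.card)
    (hIcard : I.card ≤ d + 1) :
    ∃ x ∈ X, ∀ A ∈ I, x ∈ A := by
  classical
  obtain ⟨A0, hA0⟩ := hne
  by_contra hcon
  push_neg at hcon
  have hsub : X ⊆ I.biUnion (fun A => X \ A) := by
    intro x hx
    obtain ⟨A, hA, hxA⟩ := hcon x hx
    exact Finset.mem_biUnion.mpr ⟨A, hA, Finset.mem_sdiff.mpr ⟨hx, hxA⟩⟩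
  have h1 : X.card ≤ ∑ A ∈ I, (X \ A).card :=
    (Finset.card_le_card hsub).trans (Finset.card_biUnion_le)
  have hn0 : 0 < X.card := by
    obtain ⟨hA0X, hA0c⟩ := hIs A0 hA0
    have hle := Finset.card_le_card hA0X
    by_contra h
    push_neg at h
    have : A0.card = 0 := by omega
    rw [this] at hA0c
    omega
  have h2 : ∀ A ∈ I, (d+1) * (X \ A).card ≤ X.card - 1 := by
    intro A hA
    obtain ⟨hAX, hAc⟩ := hIs A hA
    have hle := Finset.card_le_card hAX
    have e0 : (X \ A).card = X.card - A.card := Finset.card_sdiff_of_subset hAX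
    have e1 : (d+1) * (X.card - A.card) = (d+1) * X.card - (d+1) * A.card :=
      Nat.mul_sub _ _ _
    have e2 : (d+1) * X.card = d * X.card + X.card := by ring
    have e3 : (d+1) * A.card ≤ (d+1) * X.card := Nat.mul_le_mul_left _ hle
    rw [e0, e1]
    omega
  have h3 : (d+1) * ∑ A ∈ I, (X \ A).card ≤ (d+1) * (X.card - 1) := by
    rw [Finset.mul_sum]
    calc ∑ A ∈ I, (d+1) * (X \ A).card ≤ ∑ _A ∈ I, (X.card - 1) :=
          Finset.sum_le_sum h2
      _ = I.card * (X.card - 1) := by rw [Finset.sum_const, smul_eq_mul]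
      _ ≤ (d+1) * (X.card - 1) := Nat.mul_le_mul_right _ hIcard
  have h4 : (d+1) * X.card ≤ (d+1) * ∑ A ∈ I, (X \ A).card :=
    Nat.mul_le_mul_left _ h1
  have h5 : (d+1) * (X.card - 1) < (d+1) * X.card :=
    (Nat.mul_lt_mul_left (by omega)).mpr (by omega)
  omega


/-- Rado's centerpoint theorem: every finite set `X ⊆ ℝ^d` has a point `p`
such that every closed half-space containing `p` contains at least
`|X|/(d+1)` points of `X`. -/
theorem centerpoint_theorem (d : ℕ) (X : Finset (EuclideanSpace ℝ (Fin d))) :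
    ∃ p : EuclideanSpace ℝ (Fin d),
      ∀ (a : EuclideanSpace ℝ (Fin d)) (b : ℝ), a ≠ 0 → b ≤ (inner ℝ a p : ℝ) →
        ((X.card : ℝ) / (d + 1)) ≤
          (((X : Set (EuclideanSpace ℝ (Fin d))) ∩ {x | b ≤ (inner ℝ a x : ℝ)}).ncard : ℝ) := by
  classical
  set s : Finset (Finset (EuclideanSpace ℝ (Fin d))) :=
    X.powerset.filter (fun A => d * X.card < (d+1) * A.card) with hs
  have hinter : (⋂ A ∈ s,
      (convexHull ℝ (A : Set (EuclideanSpace ℝ (Fin d))))).Nonempty := by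
    apply Convex.helly_theorem' (𝕜 := ℝ) (fun A _ => convex_convexHull ℝ _)
    intro I hIsub hIcard
    rcases I.eq_empty_or_nonempty with rfl | hne
    · simp
    obtain ⟨x, hxX, hx⟩ := common_point X I hne
      (fun A hA => by
        have := hIsub hA
        simp only [hs, Finset.mem_filter, Finset.mem_powerset] at this
        exact this)
      (by simpa [finrank_euclideanSpace_fin] using hIcard)
    exact ⟨x, Set.mem_iInter₂.mpr fun A hA => subset_convexHull ℝ _ (hx A hA)⟩
  obtain ⟨p, hp⟩ := hinter
  refine ⟨p, ?_⟩
  intro a b _ha hb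
  by_contra hcon
  push_neg at hcon
  set H : Finset _ := X.filter (fun x => b ≤ (inner ℝ a x : ℝ)) with hH
  have hset : (X : Set (EuclideanSpace ℝ (Fin d))) ∩ {x | b ≤ (inner ℝ a x : ℝ)}
      = (H : Set (EuclideanSpace ℝ (Fin d))) := by
    ext x; simp [hH]
  rw [hset, Set.ncard_coe_finset] at hcon
  set A : Finset _ := X.filter (fun x => ¬ b ≤ (inner ℝ a x : ℝ)) with hA
  have hcardA : H.card + A.card = X.card := by
    rw [hH, hA, Finset.card_filter_add_card_filter_not]
  have hHle : H.card ≤ X.card := by omega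
  have hnat : (d+1) * H.card < X.card := by
    have h1 : (H.card : ℝ) * ((d:ℝ)+1) < X.card := by
      rw [← lt_div_iff₀ (by positivity)]
      exact hcon
    have h2 : ((((d+1) * H.card : ℕ)) : ℝ) < ((X.card : ℕ) : ℝ) := by
      push_cast; linarith
    exact_mod_cast h2
  have hAs : A ∈ s := by
    simp only [hs, Finset.mem_filter, Finset.mem_powerset]
    refine ⟨Finset.filter_subset _ _, ?_⟩
    have e1 : (d+1) * A.card = (d+1) * X.card - (d+1) * H.card := by
      rw [show A.card = X.card - H.card from by omega]
      exact Nat.mul_sub _ _ _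
    have e2 : (d+1) * X.card = d * X.card + X.card := by ring
    have e3 : (d+1) * H.card ≤ (d+1) * X.card := Nat.mul_le_mul_left _ hHle
    omega
  have hpA : p ∈ convexHull ℝ (A : Set (EuclideanSpace ℝ (Fin d))) :=
    Set.mem_iInter₂.mp hp A hAs
  have hlin : IsLinearMap ℝ (fun x : EuclideanSpace ℝ (Fin d) => (inner ℝ a x : ℝ)) :=
    ⟨fun x y => inner_add_right a x y, fun c x => real_inner_smul_right a x c⟩
  have hconv : Convex ℝ {x : EuclideanSpace ℝ (Fin d) | (inner ℝ a x : ℝ) < b} :=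
    convex_halfSpace_lt hlin b
  have hsub : (A : Set (EuclideanSpace ℝ (Fin d))) ⊆
      {x : EuclideanSpace ℝ (Fin d) | (inner ℝ a x : ℝ) < b} := by
    intro x hx
    simp only [hA, Finset.coe_filter, Set.mem_setOf_eq] at hx ⊢
    linarith [hx.2, not_le.mp hx.2]
  have := convexHull_min hsub hconv hpA
  simp only [Set.mem_setOf_eq] at this
  linarith
end

section
/- Let X be a set of n points in R^d, let z be an α-centerpoint of X (every closed half-space containing z contains at least αn points of X), and suppose z ∈ conv(X). Then there exist at least ⌈αn/d⌉ pairwise disjoint subsets C_1,...,C_m of X, each of size at most d+1, such that z ∈ conv(C_i) for all i. -/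
open Finset

variable {d : ℕ}

local notation "E" => EuclideanSpace ℝ (Fin d)

-- minimal subset with z in convex hull
lemma exists_min_subset (z : E) (Y : Finset E) (hz : z ∈ convexHull ℝ (Y : Set E)) :
    ∃ C ⊆ Y, z ∈ convexHull ℝ (C : Set E) ∧
      ∀ E' ⊆ C, z ∈ convexHull ℝ (E' : Set E) → E' = C := by
  classical
  set S : Finset (Finset E) := Y.powerset.filter (fun C => z ∈ convexHull ℝ (C : Set E)) with hS
  have hYS : Y ∈ S := by simp [hS, hz]
  obtain ⟨C, hCS, hmin⟩ := S.exists_minimal ⟨Y, hYS⟩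
  simp only [hS, Finset.mem_filter, Finset.mem_powerset] at hCS
  refine ⟨C, hCS.1, hCS.2, fun E' hE' hzE' => ?_⟩
  by_contra hne
  exact hne (Finset.Subset.antisymm hE' (hmin (by simp [hS, Finset.mem_powerset, hE'.trans hCS.1, hzE']) hE'))

lemma min_affineIndependent (z : E) (C : Finset E)
    (hz : z ∈ convexHull ℝ (C : Set E))
    (hmin : ∀ E' ⊆ C, z ∈ convexHull ℝ (E' : Set E) → E' = C) :
    AffineIndependent ℝ ((↑) : C → E) := by
  rw [convexHull_eq_union] at hz
  simp only [Set.mem_iUnion] at hz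
  obtain ⟨t, hts, hai, hzt⟩ := hz
  have : t = C := hmin t (by exact_mod_cast hts) hzt
  rwa [this] at hai

lemma mem_hull_filter_eq (a z : E) (C : Finset E)
    (hz : z ∈ convexHull ℝ (C : Set E))
    (hall : ∀ x ∈ C, (inner ℝ a z : ℝ) ≤ inner ℝ a x) :
    z ∈ convexHull ℝ ((C.filter (fun x => (inner ℝ a x : ℝ) = inner ℝ a z)) : Set E) := by
  classical
  rw [Finset.convexHull_eq] at hz
  obtain ⟨w, hw0, hw1, hwz⟩ := hz
  have hzsum : ∑ y ∈ C, w y • y = z := by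
    rw [Finset.centerMass, hw1, inv_one, one_smul] at hwz
    simpa using hwz
  have key : ∀ y ∈ C, w y * ((inner ℝ a y : ℝ) - inner ℝ a z) = 0 := by
    rw [← Finset.sum_eq_zero_iff_of_nonneg
      (fun y hy => mul_nonneg (hw0 y hy) (sub_nonneg.2 (hall y hy)))]
    have : (inner ℝ a z : ℝ) = ∑ y ∈ C, w y * (inner ℝ a y : ℝ) := by
      rw [← hzsum, inner_sum]
      exact Finset.sum_congr rfl fun y _ => real_inner_smul_right a y (w y)
    calc ∑ y ∈ C, w y * ((inner ℝ a y : ℝ) - inner ℝ a z)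
        = ∑ y ∈ C, (w y * (inner ℝ a y : ℝ)) - ∑ y ∈ C, w y * (inner ℝ a z : ℝ) := by
          simp [mul_sub, Finset.sum_sub_distrib]
      _ = 0 := by rw [← Finset.sum_mul, hw1, one_mul, ← this]; ring
  have hwzero : ∀ y ∈ C, (inner ℝ a y : ℝ) ≠ inner ℝ a z → w y = 0 := by
    intro y hy hne
    have := key y hy
    rcases mul_eq_zero.1 this with h | h
    · exact h
    · exact absurd (sub_eq_zero.1 h) hne
  set F := C.filter (fun x => (inner ℝ a x : ℝ) = inner ℝ a z) with hF
  have hsumF : ∑ y ∈ F, w y = 1 := by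
    rw [← hw1]
    refine Finset.sum_subset (Finset.filter_subset _ _) ?_
    intro y hy hyF
    exact hwzero y hy (by simpa [hF, hy] using hyF)
  have hcm : F.centerMass w id = z := by
    rw [Finset.centerMass_subset id (Finset.filter_subset _ _)
      (fun y hy hyF => hwzero y hy (by simpa [hF, hy] using hyF)), hwz]
  rw [← hcm]
  exact Finset.centerMass_id_mem_convexHull F
    (fun y hy => hw0 y (Finset.filter_subset _ _ hy)) (by rw [hsumF]; norm_num)

lemma card_le_of_hyperplane (a : E) (ha : a ≠ 0) (c : ℝ) (C : Finset E)
    (hai : AffineIndependent ℝ ((↑) : C → E))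
    (hsub : ∀ x ∈ C, (inner ℝ a x : ℝ) = c) :
    C.card ≤ d := by
  classical
  have hd : 0 < d := by
    have : Nontrivial E := ⟨a, 0, ha⟩
    have := Module.finrank_pos (R := ℝ) (M := E)
    rwa [finrank_euclideanSpace_fin] at this
  rcases C.eq_empty_or_nonempty with rfl | ⟨x0, hx0⟩
  · simp
  set f : E →ₗ[ℝ] ℝ := (innerSL ℝ a).toLinearMap with hf
  have hfne : f ≠ 0 := by
    intro h
    have : f a = 0 := by rw [h]; rfl
    rw [hf] at this
    simp only [ContinuousLinearMap.coe_coe, innerSL_apply_apply] at this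
    exact ha (inner_self_eq_zero.1 this)
  have hker : Module.finrank ℝ (LinearMap.ker f) + 1 = d := by
    have := Module.Dual.finrank_ker_add_one_of_ne_zero hfne
    rwa [finrank_euclideanSpace_fin] at this
  set i0 : {x // x ∈ C} := ⟨x0, hx0⟩
  have hli := (affineIndependent_iff_linearIndependent_vsub ℝ ((↑) : C → E) i0).1 hai
  -- the vectors lie in ker f
  have hmem : ∀ j : {x : {x // x ∈ C} // x ≠ i0}, ((j : {x // x ∈ C}) : E) -ᵥ (i0 : E) ∈ LinearMap.ker f := by
    intro j
    rw [LinearMap.mem_ker, hf]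
    simp only [vsub_eq_sub, ContinuousLinearMap.coe_coe, innerSL_apply_apply, inner_sub_right]
    rw [hsub _ (j : {x // x ∈ C}).2, hsub _ hx0, sub_self]
  set v' : {x : {x // x ∈ C} // x ≠ i0} → LinearMap.ker f :=
    fun j => ⟨_, hmem j⟩ with hv'
  have hli' : LinearIndependent ℝ v' := by
    apply LinearIndependent.of_comp (LinearMap.ker f).subtype
    exact hli
  have hcard := hli'.fintype_card_le_finrank
  have hcc : Fintype.card {x : {x // x ∈ C} // x ≠ i0} = C.card - 1 := by
    have : Fintype.card {x : {x // x ∈ C} // ¬ (x = i0)} =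
        Fintype.card {x // x ∈ C} - Fintype.card {x : {x // x ∈ C} // x = i0} :=
      Fintype.card_subtype_compl _
    simp only [Fintype.card_subtype_eq] at this
    rw [Fintype.card_coe] at this
    exact this
  rw [hcc] at hcard
  have hC1 : 1 ≤ C.card := Finset.card_pos.2 ⟨x0, hx0⟩
  omega

lemma filter_card_le (a z : E) (ha : a ≠ 0) (C : Finset E)
    (hz : z ∈ convexHull ℝ (C : Set E))
    (hmin : ∀ E' ⊆ C, z ∈ convexHull ℝ (E' : Set E) → E' = C) :
    (C.filter (fun x => (inner ℝ a z : ℝ) ≤ inner ℝ a x)).card ≤ d := by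
  classical
  have hai := min_affineIndependent z C hz hmin
  by_cases hall : ∀ x ∈ C, (inner ℝ a z : ℝ) ≤ inner ℝ a x
  · -- all points in the halfspace: C lies in the hyperplane
    have hmemF := mem_hull_filter_eq a z C hz hall
    have hFC : C.filter (fun x => (inner ℝ a x : ℝ) = inner ℝ a z) = C :=
      hmin _ (Finset.filter_subset _ _) hmemF
    have hsub : ∀ x ∈ C, (inner ℝ a x : ℝ) = inner ℝ a z := by
      intro x hx
      rw [← hFC] at hx
      exact (Finset.mem_filter.1 hx).2
    calc (C.filter (fun x => (inner ℝ a z : ℝ) ≤ inner ℝ a x)).card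
        ≤ C.card := Finset.card_filter_le _ _
      _ ≤ d := card_le_of_hyperplane a ha _ C hai hsub
  · push_neg at hall
    obtain ⟨x, hxC, hx⟩ := hall
    have hcard : C.card ≤ d + 1 := by
      have := hai.card_le_finrank_succ
      rw [Fintype.card_coe] at this
      refine this.trans ?_
      have hle := Submodule.finrank_le (vectorSpan ℝ (Set.range ((↑) : C → E)))
      rw [finrank_euclideanSpace_fin] at hle
      omega
    have hsub : C.filter (fun x => (inner ℝ a z : ℝ) ≤ inner ℝ a x) ⊆ C.erase x := by
      intro y hy
      rw [Finset.mem_filter] at hy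
      exact Finset.mem_erase.2 ⟨fun h => absurd (h ▸ hy.2) (not_le.2 hx), hy.1⟩
    calc (C.filter (fun x => (inner ℝ a z : ℝ) ≤ inner ℝ a x)).card
        ≤ (C.erase x).card := Finset.card_le_card hsub
      _ = C.card - 1 := Finset.card_erase_of_mem hxC
      _ ≤ d := by omega

lemma peel (z : E) : ∀ (k : ℕ) (Y : Finset E), Y.card ≤ k →
    ∃ (L : List (Finset E)),
      L.Pairwise Disjoint ∧
      (∀ C ∈ L, C ⊆ Y) ∧
      (∀ C ∈ L, z ∈ convexHull ℝ (C : Set E) ∧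
        ∀ E' ⊆ C, z ∈ convexHull ℝ (E' : Set E) → E' = C) ∧
      ∃ R : Finset E,
        (∀ x ∈ Y, x ∈ R ∨ ∃ C ∈ L, x ∈ C) ∧
        z ∉ convexHull ℝ (R : Set E) := by
  classical
  intro k
  induction k with
  | zero =>
    intro Y hY
    refine ⟨[], List.Pairwise.nil, by simp, by simp, ∅, ?_, by simp⟩
    intro x hx
    rw [Finset.card_eq_zero.1 (Nat.le_zero.1 hY)] at hx
    exact absurd hx (Finset.notMem_empty x)
  | succ k ih =>
    intro Y hY
    by_cases hz : z ∈ convexHull ℝ (Y : Set E)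
    · obtain ⟨C, hCY, hCz, hCmin⟩ := exists_min_subset z Y hz
      have hCne : C.Nonempty := by
        rw [Finset.nonempty_iff_ne_empty]
        rintro rfl
        simp at hCz
      obtain ⟨L, hLpw, hLsub, hLq, R, hcov, hR⟩ := ih (Y \ C)
        (by
          rw [Finset.card_sdiff_of_subset hCY]
          have := Finset.card_pos.2 hCne
          omega)
      refine ⟨C :: L, ?_, ?_, ?_, R, ?_, hR⟩
      · refine List.Pairwise.cons ?_ hLpw
        intro C' hC'
        rw [Finset.disjoint_left]
        intro x hxC hxC'
        exact (Finset.mem_sdiff.1 (hLsub C' hC' hxC')).2 hxC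
      · intro C' hC'
        rcases List.mem_cons.1 hC' with rfl | h
        · exact hCY
        · exact (hLsub C' h).trans (Finset.sdiff_subset)
      · intro C' hC'
        rcases List.mem_cons.1 hC' with rfl | h
        · exact ⟨hCz, hCmin⟩
        · exact hLq C' h
      · intro x hx
        by_cases hxC : x ∈ C
        · exact Or.inr ⟨C, List.mem_cons_self, hxC⟩
        · rcases hcov x (Finset.mem_sdiff.2 ⟨hx, hxC⟩) with h | ⟨C', hC', hxC'⟩
          · exact Or.inl h
          · exact Or.inr ⟨C', List.mem_cons_of_mem _ hC', hxC'⟩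
    · exact ⟨[], List.Pairwise.nil, by simp, by simp, Y, fun x hx => Or.inl hx, hz⟩

/-- From an `α`-centerpoint one obtains at least `⌈αn/d⌉` pairwise disjoint
subsets of `X`, each of size at most `d+1`, whose convex hulls all contain `z`. -/
theorem centerpoint_gives_tverberg (d : ℕ) (α : ℝ)
    (X : Finset (EuclideanSpace ℝ (Fin d))) (n : ℕ) (hn : X.card = n)
    (z : EuclideanSpace ℝ (Fin d))
    (hzX : z ∈ convexHull ℝ (X : Set (EuclideanSpace ℝ (Fin d))))
    (hcenter : ∀ (a : EuclideanSpace ℝ (Fin d)) (b : ℝ), a ≠ 0 → b ≤ (inner ℝ a z : ℝ) →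
      α * n ≤ (((X : Set (EuclideanSpace ℝ (Fin d))) ∩ {x | b ≤ (inner ℝ a x : ℝ)}).ncard : ℝ)) :
    ∃ (m : ℕ) (C : Fin m → Finset (EuclideanSpace ℝ (Fin d))),
      ⌈α * n / d⌉₊ ≤ m ∧
      (∀ i j, i ≠ j → Disjoint (C i) (C j)) ∧
      (∀ i, C i ⊆ X) ∧
      (∀ i, (C i).card ≤ d + 1) ∧
      (∀ i, z ∈ convexHull ℝ (C i : Set (EuclideanSpace ℝ (Fin d)))) := by
  classical
  obtain ⟨L, hLpw, hLsub, hLq, R, hcov, hR⟩ := peel z X.card X le_rfl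
  set m := L.length with hm
  refine ⟨m, fun i => L.get i, ?_, ?_, ?_, ?_, ?_⟩
  · -- the counting bound
    by_cases hm0 : ⌈α * n / d⌉₊ = 0
    · omega
    have hd : 0 < d := by
      by_contra hd
      have : d = 0 := by omega
      subst this
      simp at hm0
    have hdr : (0 : ℝ) < d := by exact_mod_cast hd
    have hnt : Nontrivial (EuclideanSpace ℝ (Fin d)) := by
      apply Module.nontrivial_of_finrank_pos (R := ℝ)
      rw [finrank_euclideanSpace_fin]
      exact hd
    -- get the separating direction
    obtain ⟨a, ha, hRa⟩ : ∃ a : EuclideanSpace ℝ (Fin d), a ≠ 0 ∧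
        ∀ x ∈ R, (inner ℝ a x : ℝ) < inner ℝ a z := by
      rcases R.eq_empty_or_nonempty with rfl | ⟨x0, hx0⟩
      · obtain ⟨a, ha⟩ := exists_ne (0 : EuclideanSpace ℝ (Fin d))
        exact ⟨a, ha, by simp⟩
      · obtain ⟨f, u, hfb, hfz⟩ := geometric_hahn_banach_closed_point
          (convex_convexHull ℝ (R : Set (EuclideanSpace ℝ (Fin d))))
          (R.finite_toSet.isClosed_convexHull ℝ) hR
        set a := (InnerProductSpace.toDual ℝ (EuclideanSpace ℝ (Fin d))).symm f with haa
        have key : ∀ x, (inner ℝ a x : ℝ) = f x := fun x =>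
          InnerProductSpace.toDual_symm_apply
        have ha : a ≠ 0 := by
          intro h
          have h1 := hfb x0 (subset_convexHull ℝ _ hx0)
          have h2 : f x0 = 0 := by rw [← key, h, inner_zero_left]
          have h3 : f z = 0 := by rw [← key, h, inner_zero_left]
          rw [h2] at h1; rw [h3] at hfz; linarith
        refine ⟨a, ha, fun x hx => ?_⟩
        rw [key, key]
        have := hfb x (subset_convexHull ℝ _ hx)
        linarith
    have hcen := hcenter a (inner ℝ a z) ha le_rfl
    set P : EuclideanSpace ℝ (Fin d) → Prop := fun x => (inner ℝ a z : ℝ) ≤ inner ℝ a x with hP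
    set F := X.filter P with hF
    have hset : ((X : Set (EuclideanSpace ℝ (Fin d))) ∩ {x | (inner ℝ a z : ℝ) ≤ inner ℝ a x}) =
        (F : Set (EuclideanSpace ℝ (Fin d))) := by
      ext x
      simp [hF, hP, Finset.mem_filter]
    rw [hset, Set.ncard_coe_finset] at hcen
    have hsub : F ⊆ (Finset.univ : Finset (Fin m)).biUnion
        (fun i => (L.get i).filter P) := by
      intro x hx
      rw [hF, Finset.mem_filter] at hx
      rcases hcov x hx.1 with hR' | ⟨C, hC, hxC⟩
      · exact absurd hx.2 (not_le.2 (hRa x hR'))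
      · obtain ⟨i, hi⟩ := List.mem_iff_get.1 hC
        exact Finset.mem_biUnion.2 ⟨i, Finset.mem_univ _,
          Finset.mem_filter.2 ⟨hi ▸ hxC, hx.2⟩⟩
    have hcount : F.card ≤ m * d := by
      calc F.card ≤ ((Finset.univ : Finset (Fin m)).biUnion
            (fun i => (L.get i).filter P)).card := Finset.card_le_card hsub
        _ ≤ ∑ i : Fin m, ((L.get i).filter P).card := Finset.card_biUnion_le
        _ ≤ ∑ _i : Fin m, d := by
            refine Finset.sum_le_sum fun i _ => ?_
            exact filter_card_le a z ha (L.get i)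
              (hLq _ (L.get_mem i)).1 (hLq _ (L.get_mem i)).2
        _ = m * d := by simp [Finset.sum_const, Finset.card_univ]
    rw [Nat.ceil_le, div_le_iff₀ hdr]
    calc α * n ≤ (F.card : ℝ) := hcen
      _ ≤ (m : ℝ) * d := by exact_mod_cast hcount
  · intro i j hij
    rcases lt_trichotomy i j with h | h | h
    · exact List.pairwise_iff_get.1 hLpw i j h
    · exact absurd h hij
    · exact (List.pairwise_iff_get.1 hLpw j i h).symm
  · exact fun i => hLsub _ (L.get_mem i)
  · intro i
    have hq := hLq _ (L.get_mem i)
    have hai := min_affineIndependent z _ hq.1 hq.2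
    have := hai.card_le_finrank_succ
    rw [Fintype.card_coe] at this
    refine this.trans ?_
    have hle := Submodule.finrank_le (vectorSpan ℝ
      (Set.range (Subtype.val : {x // x ∈ L.get i} → EuclideanSpace ℝ (Fin d))))
    rw [finrank_euclideanSpace_fin] at hle
    omega
  · exact fun i => (hLq _ (L.get_mem i)).1
end

section
/- For any finite set S of points in Z^d, there exists a point z ∈ Z^d such that every closed half-space containing z contains at least ⌈|S|/2^d⌉ points of S. -/
set_option maxHeartbeats 1000000
open Finset


private def idot {d : ℕ} (A z : Fin d → ℤ) : ℤ := ∑ i, A i * z i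

private theorem int_doignon {d : ℕ} {ι : Type} [Fintype ι] (A : ι → Fin d → ℤ) (b : ι → ℤ)
    (h : ∀ J : Finset ι, J.card ≤ 2 ^ d → ∃ z : Fin d → ℤ, ∀ i ∈ J, idot (A i) z ≤ b i) :
    ∃ z : Fin d → ℤ, ∀ i, idot (A i) z ≤ b i := by
  classical
  by_contra hcon
  set Feas : Finset ι → Prop := fun J => ∃ z, ∀ i ∈ J, idot (A i) z ≤ b i with hFeas
  have huniv : ¬ Feas univ := by
    intro ⟨z, hz⟩; exact hcon ⟨z, fun i => hz i (mem_univ i)⟩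
  -- minimal infeasible J
  obtain ⟨J, hJmem, hJmin⟩ := Finset.exists_min_image
    ((univ : Finset (Finset ι)).filter fun J => ¬ Feas J) Finset.card
    ⟨univ, by simp [huniv]⟩
  have hJinf : ¬ Feas J := (Finset.mem_filter.1 hJmem).2
  have hmin : ∀ K : Finset ι, K.card < J.card → Feas K := by
    intro K hK
    by_contra hKinf
    exact absurd (hJmin K (by simp [hKinf])) (by omega)
  have hcard : 2 ^ d < J.card := by
    by_contra hle
    exact hJinf (h J (by omega))
  have hdrop : ∀ i ∈ J, ∃ x : Fin d → ℤ, ∀ l ∈ J.erase i, idot (A l) x ≤ b l := by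
    intro i hi
    exact hmin (J.erase i) (Finset.card_erase_lt_of_mem hi)
  -- relaxation
  have relax : ∀ K : Finset ι, K ⊆ J → ∃ c : ι → ℤ,
      (∀ i, b i ≤ c i) ∧ (¬ ∃ z, ∀ i ∈ J, idot (A i) z ≤ c i) ∧
      (∀ i ∈ K, ∃ w : Fin d → ℤ, idot (A i) w = c i + 1 ∧
        ∀ l ∈ J, l ≠ i → idot (A l) w ≤ c l) := by
    intro K
    induction K using Finset.induction_on with
    | empty => exact fun _ => ⟨b, fun i => le_refl _, hJinf, by simp⟩
    | @insert i K hiK ih =>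
      intro hsub
      obtain ⟨c, hbc, hinf, hK⟩ := ih ((Finset.subset_insert i K).trans hsub)
      have hiJ : i ∈ J := hsub (Finset.mem_insert_self i K)
      obtain ⟨x0, hx0⟩ := hdrop i hiJ
      set P : ℤ → Prop := fun v => ∃ w : Fin d → ℤ, idot (A i) w = v ∧
        ∀ l ∈ J, l ≠ i → idot (A l) w ≤ c l with hP
      have hbdd : ∀ v : ℤ, P v → c i + 1 ≤ v := by
        intro v ⟨w, hwv, hw⟩
        by_contra hlt
        refine hinf ⟨w, fun l hl => ?_⟩
        by_cases hli : l = i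
        · subst hli; omega
        · exact hw l hl hli
      have hinh : P (idot (A i) x0) := by
        refine ⟨x0, rfl, fun l hl hli => ?_⟩
        exact le_trans (hx0 l (Finset.mem_erase.2 ⟨hli, hl⟩)) (hbc l)
      obtain ⟨μ, hμP, hμle⟩ := Int.exists_least_of_bdd ⟨c i + 1, hbdd⟩ ⟨_, hinh⟩
      have hciμ : c i + 1 ≤ μ := hbdd μ hμP
      refine ⟨Function.update c i (μ - 1), ?_, ?_, ?_⟩
      · intro l
        by_cases hli : l = i
        · subst hli; simp only [Function.update_self]; have h1 := hbc l; omega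
        · simp only [Function.update_of_ne hli]; exact hbc l
      · intro ⟨z, hz⟩
        have hzP : P (idot (A i) z) := by
          refine ⟨z, rfl, fun l hl hli => ?_⟩
          have := hz l hl
          rwa [Function.update_of_ne hli] at this
        have h1 := hμle _ hzP
        have h2 := hz i hiJ
        rw [Function.update_self] at h2
        omega
      · intro l hl
        rcases Finset.mem_insert.1 hl with hli | hlK
        · subst hli
          obtain ⟨w, hwμ, hw⟩ := hμP
          refine ⟨w, ?_, fun l' hl' hl'i => ?_⟩
          · rw [Function.update_self]; omega
          · rw [Function.update_of_ne hl'i]; exact hw l' hl' hl'i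
        · obtain ⟨w, hwe, hw⟩ := hK l hlK
          have hlne : l ≠ i := fun hli => hiK (hli ▸ hlK)
          refine ⟨w, ?_, fun l' hl' hl'l => ?_⟩
          · rw [Function.update_of_ne hlne]; exact hwe
          · by_cases hl'i : l' = i
            · subst hl'i
              rw [Function.update_self]
              have := hw l' hl' (by exact fun h => hl'l h)
              omega
            · rw [Function.update_of_ne hl'i]; exact hw l' hl' hl'l
  obtain ⟨c, hbc, hinf, hwit⟩ := relax J (le_refl _)
  choose w hw1 hw2 using hwit
  -- pigeonhole mod 2
  have hcard2 : (univ : Finset (Fin d → ZMod 2)).card < J.attach.card := by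
    simp only [Finset.card_univ, Finset.card_attach]
    simpa using hcard
  obtain ⟨i, -, j, -, hij, hpar⟩ :=
    Finset.exists_ne_map_eq_of_card_lt_of_maps_to hcard2
      (f := fun (i : {x // x ∈ J}) => (fun t => ((w i.1 i.2 t : ℤ) : ZMod 2)))
      (fun _ _ => mem_univ _)
  set wi := w i.1 i.2
  set wj := w j.1 j.2
  have heven : ∀ t, 2 ∣ (wi t + wj t) := by
    intro t
    have h1 : ((wi t : ℤ) : ZMod 2) = ((wj t : ℤ) : ZMod 2) := congrFun hpar t
    have h0 : (((wi t + wj t : ℤ)) : ZMod 2) = 0 := by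
      push_cast
      rw [h1, ← two_mul]
      simp [show (2 : ZMod 2) = 0 by decide]
    exact (ZMod.intCast_zmod_eq_zero_iff_dvd _ 2).1 h0
  set y : Fin d → ℤ := fun t => (wi t + wj t) / 2 with hy
  have hy2 : ∀ t, 2 * y t = wi t + wj t := fun t => Int.mul_ediv_cancel' (heven t)
  refine hinf ⟨y, fun l hl => ?_⟩
  have hkey : 2 * idot (A l) y = idot (A l) wi + idot (A l) wj := by
    simp only [idot, Finset.mul_sum, ← Finset.sum_add_distrib]
    refine Finset.sum_congr rfl fun t _ => ?_
    linear_combination (A l t) * hy2 t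
  have hine : i.1 ≠ j.1 := fun h => hij (Subtype.ext h)
  by_cases hli : l = i.1
  · have e1 : idot (A l) wi = c l + 1 := by rw [hli]; exact hw1 i.1 i.2
    have e2 : idot (A l) wj ≤ c l := hw2 j.1 j.2 l hl (by rw [hli]; exact fun h => hine h)
    omega
  · by_cases hlj : l = j.1
    · have e1 : idot (A l) wj = c l + 1 := by rw [hlj]; exact hw1 j.1 j.2
      have e2 : idot (A l) wi ≤ c l := hw2 i.1 i.2 l hl hli
      omega
    · have e1 : idot (A l) wi ≤ c l := hw2 i.1 i.2 l hl hli
      have e2 : idot (A l) wj ≤ c l := hw2 j.1 j.2 l hl hlj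
      omega



private def toE {d : ℕ} (v : Fin d → ℤ) : EuclideanSpace ℝ (Fin d) := WithLp.toLp 2 (fun i => (v i : ℝ))

private lemma toE_apply {d : ℕ} (v : Fin d → ℤ) (i : Fin d) : toE v i = (v i : ℝ) := rfl

private lemma sep_lemma {d : ℕ} (T : Finset (Fin d → ℤ)) (hT : T.Nonempty) (v : Fin d → ℤ)
    (hv : toE v ∉ convexHull ℝ (toE '' (T : Set (Fin d → ℤ)))) :
    ∃ A : Fin d → ℤ, ∀ t ∈ T, (∑ i, (A i : ℝ) * (t i : ℝ)) < ∑ i, (A i : ℝ) * (v i : ℝ) := by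
  classical
  set C : Set (EuclideanSpace ℝ (Fin d)) := convexHull ℝ (toE '' (T : Set (Fin d → ℤ))) with hC
  have hconv : Convex ℝ C := convex_convexHull _ _
  have hclosed : IsClosed C := (T.finite_toSet.image toE).isClosed_convexHull (𝕜 := ℝ)
  obtain ⟨f, u, hfc, hfv⟩ := geometric_hahn_banach_closed_point hconv hclosed hv
  set a : Fin d → ℝ := fun i => f (EuclideanSpace.single i 1) with ha
  have hf : ∀ y : EuclideanSpace ℝ (Fin d), f y = ∑ i, y i * a i := by
    intro y
    have hy : y = ∑ i, y i • EuclideanSpace.single i (1 : ℝ) := by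
      ext j
      rw [WithLp.ofLp_sum, Finset.sum_apply]
      simp [EuclideanSpace.single_apply]
    conv_lhs => rw [hy]
    rw [map_sum]
    exact Finset.sum_congr rfl fun i _ => by rw [map_smul, smul_eq_mul]
  set δ : ℝ := f (toE v) - u with hδdef
  have hδ : 0 < δ := by simp only [hδdef]; linarith
  have hmargin : ∀ t ∈ T, δ ≤ ∑ i, a i * ((v i : ℝ) - (t i : ℝ)) := by
    intro t ht
    have h1 : f (toE t) < u := hfc _ (subset_convexHull ℝ _ ⟨t, ht, rfl⟩)
    have h2 : f (toE v) - f (toE t) ≥ δ := by simp only [hδdef]; linarith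
    calc δ ≤ f (toE v) - f (toE t) := h2
      _ = ∑ i, a i * ((v i : ℝ) - (t i : ℝ)) := by
          rw [hf, hf]
          rw [← Finset.sum_sub_distrib]
          exact Finset.sum_congr rfl fun i _ => by rw [toE_apply, toE_apply]; ring
  have hCex : ∃ Cr : ℝ, 0 ≤ Cr ∧ ∀ t ∈ T, (∑ i, |(v i : ℝ) - (t i : ℝ)|) ≤ Cr := by
    refine ⟨∑ t ∈ T, ∑ i, |(v i : ℝ) - (t i : ℝ)|, ?_, ?_⟩
    · exact Finset.sum_nonneg fun t _ => Finset.sum_nonneg fun i _ => abs_nonneg _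
    · intro t ht
      exact Finset.single_le_sum (f := fun t => ∑ i, |(v i : ℝ) - (t i : ℝ)|)
        (fun t _ => Finset.sum_nonneg fun i _ => abs_nonneg _) ht
  obtain ⟨Creal, hCnn, hCle⟩ := hCex
  obtain ⟨N, hN⟩ := exists_nat_gt (Creal / (2 * δ))
  have hN1 : 0 < (N : ℝ) := lt_of_le_of_lt (div_nonneg hCnn (by linarith)) hN
  have hNδ : Creal / 2 < (N : ℝ) * δ := by
    rw [div_lt_iff₀ (by norm_num : (0:ℝ) < 2)]
    calc Creal = Creal / (2 * δ) * (2 * δ) := by field_simp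
      _ < N * (2 * δ) := by apply mul_lt_mul_of_pos_right hN; positivity
      _ = N * δ * 2 := by ring
  refine ⟨fun i => round ((N : ℝ) * a i), fun t ht => ?_⟩
  rw [← sub_pos, ← Finset.sum_sub_distrib]
  have hsplit : ∀ i, (round ((N:ℝ) * a i) : ℝ) * (v i : ℝ) - (round ((N:ℝ) * a i) : ℝ) * (t i : ℝ)
      = (N : ℝ) * (a i * ((v i : ℝ) - (t i : ℝ)))
        + ((round ((N:ℝ) * a i) : ℝ) - (N:ℝ) * a i) * ((v i : ℝ) - (t i : ℝ)) := by
    intro i; ring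
  rw [Finset.sum_congr rfl fun i _ => hsplit i, Finset.sum_add_distrib, ← Finset.mul_sum]
  have herr : |∑ i, ((round ((N:ℝ) * a i) : ℝ) - (N:ℝ) * a i) * ((v i : ℝ) - (t i : ℝ))|
      ≤ Creal / 2 := by
    calc |∑ i, ((round ((N:ℝ) * a i) : ℝ) - (N:ℝ) * a i) * ((v i : ℝ) - (t i : ℝ))|
        ≤ ∑ i, |((round ((N:ℝ) * a i) : ℝ) - (N:ℝ) * a i) * ((v i : ℝ) - (t i : ℝ))| :=
          Finset.abs_sum_le_sum_abs _ _
      _ ≤ ∑ i, (1 / 2) * |(v i : ℝ) - (t i : ℝ)| := by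
          refine Finset.sum_le_sum fun i _ => ?_
          rw [abs_mul]
          apply mul_le_mul_of_nonneg_right _ (abs_nonneg _)
          rw [abs_sub_comm]
          exact abs_sub_round _
      _ = (1 / 2) * ∑ i, |(v i : ℝ) - (t i : ℝ)| := by rw [Finset.mul_sum]
      _ ≤ (1 / 2) * Creal := by
          apply mul_le_mul_of_nonneg_left _ (by norm_num)
          exact hCle t ht
      _ = Creal / 2 := by ring
  have hfirst : (N : ℝ) * δ ≤ (N : ℝ) * ∑ i, a i * ((v i : ℝ) - (t i : ℝ)) :=
    mul_le_mul_of_nonneg_left (hmargin t ht) (le_of_lt hN1)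
  obtain ⟨hlo, hhi⟩ := abs_le.1 herr
  have hstep : (0:ℝ) < ↑N * δ + -(Creal / 2) := by linarith
  have := lt_of_lt_of_le hstep (add_le_add hfirst hlo)
  exact this

private lemma idot_single {d : ℕ} (i : Fin d) (c : ℤ) (s : Fin d → ℤ) :
    idot (fun j => if j = i then c else 0) s = c * s i := by
  rw [idot, Finset.sum_eq_single i]
  · simp
  · intro j _ hji; simp [hji]
  · intro h; exact absurd (Finset.mem_univ i) h



private lemma counting {α β : Type*} [DecidableEq β] (J : Finset α) (S : Finset β)
    (f : α → Finset β) (e : ℕ)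
    (hsub : ∀ x ∈ J, f x ⊆ S) (hmiss : ∀ x ∈ J, S.card - (f x).card ≤ e)
    (hlt : J.card * e < S.card) : ∃ s ∈ S, ∀ x ∈ J, s ∈ f x := by
  classical
  set Bd := J.biUnion fun x => S \ f x with hBdd
  have hBd : Bd.card ≤ J.card * e := by
    calc Bd.card ≤ ∑ x ∈ J, (S \ f x).card := Finset.card_biUnion_le
      _ ≤ ∑ _x ∈ J, e := Finset.sum_le_sum fun x hx => by
            rw [Finset.card_sdiff_of_subset (hsub x hx)]; exact hmiss x hx
      _ = J.card * e := by rw [Finset.sum_const, smul_eq_mul]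
  have hne : (S \ Bd).Nonempty := by
    rw [← Finset.card_pos]
    have h1 : S.card ≤ (S \ Bd).card + Bd.card := by
      calc S.card ≤ (S ∪ Bd).card := Finset.card_le_card Finset.subset_union_left
        _ = (S \ Bd).card + Bd.card := (Finset.card_sdiff_add_card _ _).symm
    omega
  obtain ⟨s, hs⟩ := hne
  rw [Finset.mem_sdiff] at hs
  refine ⟨s, hs.1, fun x hx => ?_⟩
  by_contra hsf
  exact hs.2 (Finset.mem_biUnion.2 ⟨x, hx, Finset.mem_sdiff.2 ⟨hs.1, hsf⟩⟩)


/-- Integer centerpoint: any finite set `S` of integer points in `ℝ^d` has an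
integer point `z` such that every closed half-space containing `z` contains
at least `⌈|S|/2^d⌉` points of `S`. -/
theorem integer_centerpoint (d : ℕ) (S : Finset (EuclideanSpace ℝ (Fin d)))
    (hS : ∀ x ∈ S, ∀ i : Fin d, ∃ m : ℤ, x i = (m : ℝ)) :
    ∃ z : EuclideanSpace ℝ (Fin d),
      (∀ i : Fin d, ∃ m : ℤ, z i = (m : ℝ)) ∧
      ∀ (a : EuclideanSpace ℝ (Fin d)) (b : ℝ), a ≠ 0 → b ≤ (inner ℝ a z : ℝ) →
        ⌈(S.card : ℝ) / 2 ^ d⌉₊ ≤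
          ((S : Set (EuclideanSpace ℝ (Fin d))) ∩ {x | b ≤ (inner ℝ a x : ℝ)}).ncard := by
  classical
  by_cases hS0 : S = ∅
  · subst hS0
    refine ⟨toE (fun _ => 0), fun i => ⟨0, rfl⟩, ?_⟩
    intro a b _ _
    simp
  have hSne : S.Nonempty := Finset.nonempty_iff_ne_empty.2 hS0
  set n := S.card with hn
  have hn1 : 1 ≤ n := Finset.card_pos.2 hSne
  set k := ⌈(n : ℝ) / 2 ^ d⌉₊ with hk
  have hk1 : 1 ≤ k := Nat.ceil_pos.2 (by positivity)
  have hkn : k ≤ n := by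
    rw [hk]
    apply Nat.ceil_le.2
    apply div_le_self (by positivity)
    exact one_le_pow₀ (by norm_num)
  have hcnt : 2 ^ d * (k - 1) ≤ n - 1 := by
    have h1 : ((k - 1 : ℕ) : ℝ) < (n : ℝ) / 2 ^ d := Nat.lt_ceil.1 (by omega)
    have h2 : ((k - 1 : ℕ) : ℝ) * 2 ^ d < n := by
      rw [← lt_div_iff₀ (by positivity)]
      exact h1
    have h3 : (k - 1) * 2 ^ d < n := by exact_mod_cast h2
    have h4 : 2 ^ d * (k - 1) = (k - 1) * 2 ^ d := Nat.mul_comm _ _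
    omega
  set p := n - k + 1 with hp
  -- integer coordinates
  set π : EuclideanSpace ℝ (Fin d) → (Fin d → ℤ) := fun x i => ⌊x i⌋ with hπdef
  have hπ : ∀ x ∈ S, ∀ i, ((π x i : ℝ)) = x i := by
    intro x hx i
    obtain ⟨m, hm⟩ := hS x hx i
    simp [hπdef, hm]
  have hback : ∀ x ∈ S, toE (π x) = x := by
    intro x hx
    ext i
    exact hπ x hx i
  have hπinj : Set.InjOn π ↑S := fun x hx y hy hxy => by
    rw [← hback x hx, ← hback y hy, hxy]
  set Sint := S.image π with hSint
  have hScard : Sint.card = n := Finset.card_image_of_injOn hπinj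
  -- bound M
  obtain ⟨M, hMb⟩ : ∃ M : ℤ, ∀ v ∈ Sint, ∀ i, -M ≤ v i ∧ v i ≤ M := by
    refine ⟨((Sint.sup fun v => Finset.univ.sup fun i => (v i).natAbs : ℕ) : ℤ), ?_⟩
    intro v hv i
    have h1 : (v i).natAbs ≤ (Sint.sup fun v => Finset.univ.sup fun i => (v i).natAbs) := by
      refine le_trans ?_ (Finset.le_sup (f := fun v => Finset.univ.sup fun i => (v i).natAbs) hv)
      exact Finset.le_sup (f := fun i => (v i).natAbs) (Finset.mem_univ i)
    revert h1
    generalize (Sint.sup fun v => Finset.univ.sup fun i => (v i).natAbs) = X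
    intro h1
    omega
  set 𝒯 := Sint.powersetCard p with h𝒯
  have hTsub : ∀ T ∈ 𝒯, T ⊆ Sint := fun T hT => (Finset.mem_powersetCard.1 hT).1
  have hTcard : ∀ T ∈ 𝒯, T.card = p := fun T hT => (Finset.mem_powersetCard.1 hT).2
  have hTne : ∀ T ∈ 𝒯, T.Nonempty := fun T hT =>
    Finset.card_pos.1 (by rw [hTcard T hT]; omega)
  set Box : Finset (Fin d → ℤ) := Fintype.piFinset (fun _ => Finset.Icc (-M) M) with hBox
  set Bad : Finset (Fin d → ℤ) := Box.filter
    (fun v => ∃ T ∈ 𝒯, toE v ∉ convexHull ℝ (toE '' (T : Set (Fin d → ℤ)))) with hBad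
  have hsel : ∀ v ∈ Bad, ∃ T ∈ 𝒯, ∃ A : Fin d → ℤ, ∀ t ∈ T, idot A t < idot A v := by
    intro v hv
    obtain ⟨T, hT𝒯, hTv⟩ := (Finset.mem_filter.1 hv).2
    obtain ⟨A, hA⟩ := sep_lemma T (hTne T hT𝒯) v hTv
    refine ⟨T, hT𝒯, A, fun t ht => ?_⟩
    have h2 : ((∑ i, A i * t i : ℤ) : ℝ) < ((∑ i, A i * v i : ℤ) : ℝ) := by
      push_cast
      exact hA t ht
    simp only [idot]
    exact_mod_cast h2
  choose Tf hTf Af hAf using hsel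
  -- the halfspace family
  set Avec : ((Fin d × Bool) ⊕ {v : Fin d → ℤ // v ∈ Bad}) → Fin d → ℤ :=
    Sum.elim (fun q => fun j => if j = q.1 then (if q.2 then 1 else -1) else 0)
      (fun w => Af w.1 w.2) with hAvec
  set bvec : ((Fin d × Bool) ⊕ {v : Fin d → ℤ // v ∈ Bad}) → ℤ :=
    Sum.elim (fun _ => M) (fun w => idot (Af w.1 w.2) w.1 - 1) with hbvec
  have hfeas : ∀ J : Finset ((Fin d × Bool) ⊕ {v : Fin d → ℤ // v ∈ Bad}),
      J.card ≤ 2 ^ d → ∃ z : Fin d → ℤ, ∀ x ∈ J, idot (Avec x) z ≤ bvec x := by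
    intro J hJ
    obtain ⟨s, hsS, hsall⟩ := counting J Sint
      (Sum.elim (fun _ => Sint) (fun w => Tf w.1 w.2)) (k - 1)
      (by
        rintro (q | w) _
        · exact subset_rfl
        · exact hTsub _ (hTf w.1 w.2))
      (by
        rintro (q | w) _
        · simp
        · have := hTcard _ (hTf w.1 w.2)
          simp only [Sum.elim_inr, this, hScard]
          omega)
      (by
        have hmul : J.card * (k - 1) ≤ 2 ^ d * (k - 1) := Nat.mul_le_mul_right _ hJ
        rw [hScard]
        omega)
    refine ⟨s, fun x hx => ?_⟩
    match x with
    | Sum.inl (i, true) =>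
      have h1 : idot (fun j => if j = i then 1 else 0) s ≤ M := by
        rw [idot_single]
        have := (hMb s hsS i).2
        omega
      exact h1
    | Sum.inl (i, false) =>
      have h1 : idot (fun j => if j = i then -1 else 0) s ≤ M := by
        rw [idot_single]
        have := (hMb s hsS i).1
        omega
      exact h1
    | Sum.inr w =>
      have hsT : s ∈ Tf w.1 w.2 := by
        have := hsall _ hx
        simpa using this
      have h1 : idot (Af w.1 w.2) s < idot (Af w.1 w.2) w.1 := hAf w.1 w.2 s hsT
      have h2 : idot (Af w.1 w.2) s ≤ idot (Af w.1 w.2) w.1 - 1 := by omega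
      exact h2
  obtain ⟨ζ, hζ⟩ := int_doignon Avec bvec hfeas
  have hζbox : ∀ i, -M ≤ ζ i ∧ ζ i ≤ M := by
    intro i
    have h1 : idot (fun j => if j = i then 1 else 0) ζ ≤ M := hζ (Sum.inl (i, true))
    have h2 : idot (fun j => if j = i then -1 else 0) ζ ≤ M := hζ (Sum.inl (i, false))
    rw [idot_single] at h1 h2
    omega
  have hζBox : ζ ∈ Box := by
    rw [hBox, Fintype.mem_piFinset]
    intro i
    rw [Finset.mem_Icc]
    exact hζbox i
  have hζhull : ∀ T ∈ 𝒯, toE ζ ∈ convexHull ℝ (toE '' (T : Set (Fin d → ℤ))) := by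
    intro T hT
    by_contra hcon
    have hζBad : ζ ∈ Bad := by
      rw [hBad, Finset.mem_filter]
      exact ⟨hζBox, T, hT, hcon⟩
    have h1 : idot (Af ζ hζBad) ζ ≤ idot (Af ζ hζBad) ζ - 1 := hζ (Sum.inr ⟨ζ, hζBad⟩)
    omega
  refine ⟨toE ζ, fun i => ⟨ζ i, rfl⟩, ?_⟩
  intro a b _ hab
  by_contra hncard
  push_neg at hncard
  set F := S.filter (fun x => b ≤ (inner ℝ a x : ℝ)) with hF
  have hset : ((S : Set (EuclideanSpace ℝ (Fin d))) ∩ {x | b ≤ (inner ℝ a x : ℝ)}) = ↑F := by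
    rw [hF]
    ext x
    simp
  rw [hset, Set.ncard_coe_finset] at hncard
  set G := S \ F with hG
  have hGcard : p ≤ G.card := by
    have h2 : F.card ≤ S.card := Finset.card_le_card (Finset.filter_subset _ _)
    have h1 : G.card = n - F.card := by
      rw [hG, Finset.card_sdiff_of_subset (Finset.filter_subset _ _)]
    omega
  obtain ⟨T', hT'G, hT'card⟩ := Finset.exists_subset_card_eq hGcard
  have hT'S : T' ⊆ S := hT'G.trans (Finset.sdiff_subset)
  have hTmem : T'.image π ∈ 𝒯 := by
    rw [h𝒯, Finset.mem_powersetCard]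
    constructor
    · rw [hSint]; exact Finset.image_subset_image hT'S
    · rw [Finset.card_image_of_injOn (hπinj.mono (by exact_mod_cast hT'S))]
      exact hT'card
  have hhull := hζhull _ hTmem
  have himg : toE '' ((T'.image π : Finset (Fin d → ℤ)) : Set (Fin d → ℤ))
      = (T' : Set (EuclideanSpace ℝ (Fin d))) := by
    ext x
    constructor
    · rintro ⟨w, hw, rfl⟩
      rw [Finset.coe_image] at hw
      obtain ⟨y, hy, rfl⟩ := hw
      rw [hback y (hT'S hy)]
      exact hy
    · intro hx
      exact ⟨π x, by rw [Finset.coe_image]; exact Set.mem_image_of_mem _ hx, hback x (hT'S hx)⟩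
  rw [himg] at hhull
  have hopen : (T' : Set (EuclideanSpace ℝ (Fin d)))
      ⊆ {x : EuclideanSpace ℝ (Fin d) | (inner ℝ a x : ℝ) < b} := by
    intro x hx
    have hxG : x ∈ G := hT'G hx
    rw [hG, Finset.mem_sdiff, hF, Finset.mem_filter] at hxG
    have h2 : ¬ (b ≤ (inner ℝ a x : ℝ)) := fun hcon => hxG.2 ⟨hxG.1, hcon⟩
    exact not_le.1 h2
  have hcvx : Convex ℝ {x : EuclideanSpace ℝ (Fin d) | (inner ℝ a x : ℝ) < b} := by
    apply convex_halfSpace_lt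
    exact ⟨fun x y => inner_add_right _ _ _, fun c x => real_inner_smul_right _ _ _⟩
  have hmem := convexHull_min hopen hcvx hhull
  rw [Set.mem_setOf_eq] at hmem
  linarith
end

section
/- Let F be a finite family of convex sets in R^d. If every subfamily of F of size at most 2^d has a common point with integer coordinates, then the intersection of all sets in F contains a point with integer coordinates. -/
open Finset

namespace DoignonProof

variable {d : ℕ}

/-- The canonical map from integer vectors to `ℝ^d`. -/
def toR (v : Fin d → ℤ) : EuclideanSpace ℝ (Fin d) := WithLp.toLp 2 (fun i => (v i : ℝ))

lemma toR_inj : Function.Injective (toR (d := d)) := by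
  intro u v h
  funext i
  have : (u i : ℝ) = (v i : ℝ) := congrFun (congrArg WithLp.ofLp h) i
  exact_mod_cast this

/-- Convex hull (in `ℝ^d`) of a finite set of integer vectors. -/
def hull (X : Finset (Fin d → ℤ)) : Set (EuclideanSpace ℝ (Fin d)) :=
  convexHull ℝ (toR '' ↑X)

lemma mem_hull_of_mem {X : Finset (Fin d → ℤ)} {x : Fin d → ℤ} (hx : x ∈ X) :
    toR x ∈ hull X :=
  subset_convexHull ℝ _ ⟨x, by simpa using hx, rfl⟩

lemma hull_mono {X Y : Finset (Fin d → ℤ)} (h : X ⊆ Y) : hull X ⊆ hull Y :=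
  convexHull_mono (Set.image_mono (Finset.coe_subset.2 h))

lemma hull_subset_of_forall {X : Finset (Fin d → ℤ)} {C : Set (EuclideanSpace ℝ (Fin d))}
    (hC : Convex ℝ C) (h : ∀ x ∈ X, toR x ∈ C) : hull X ⊆ C := by
  apply convexHull_min _ hC
  rintro z ⟨x, hx, rfl⟩
  exact h x (by simpa using hx)

lemma hull_subset_hull {X Y : Finset (Fin d → ℤ)} (h : ∀ x ∈ X, toR x ∈ hull Y) :
    hull X ⊆ hull Y :=
  hull_subset_of_forall (convex_convexHull ℝ _) h

/-- The set of lattice points in the hull of `X`. -/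
def latSet (X : Finset (Fin d → ℤ)) : Set (Fin d → ℤ) := {v | toR v ∈ hull X}

lemma latSet_finite (X : Finset (Fin d → ℤ)) : (latSet X).Finite := by
  classical
  set M : ℕ := X.sup fun v => Finset.univ.sup fun i => (v i).natAbs with hM
  have hbox : hull X ⊆ {z : EuclideanSpace ℝ (Fin d) | ∀ i, |z i| ≤ (M : ℝ)} := by
    apply convexHull_min
    · rintro z ⟨x, hx, rfl⟩ i
      have hx2 : (Finset.univ.sup fun j => (x j).natAbs) ≤ M :=
        Finset.le_sup (s := X) (f := fun w : Fin d → ℤ => Finset.univ.sup fun j => (w j).natAbs)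
          (by simpa using hx)
      have h1 : (x i).natAbs ≤ M :=
        le_trans (Finset.le_sup (f := fun j => (x j).natAbs) (Finset.mem_univ i)) hx2
      have : |x i| ≤ (M : ℤ) := by
        rwa [Int.abs_eq_natAbs, Int.ofNat_le]
      calc |toR x i| = |((x i : ℤ) : ℝ)| := rfl
        _ ≤ ((M : ℤ) : ℝ) := by exact_mod_cast this
        _ = (M : ℝ) := by push_cast; ring
    · intro z hz w hw a b ha hb hab i
      have : (a • z + b • w) i = a * z i + b * w i := by
        simp [PiLp.add_apply, PiLp.smul_apply]
      rw [this]
      calc |a * z i + b * w i| ≤ a * |z i| + b * |w i| := by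
            refine le_trans (abs_add_le _ _) ?_
            rw [abs_mul, abs_mul, abs_of_nonneg ha, abs_of_nonneg hb]
        _ ≤ a * M + b * M := by
            gcongr
            exacts [hz i, hw i]
        _ = M := by rw [← add_mul, hab, one_mul]
  apply Set.Finite.subset (Set.finite_Icc (fun _ : Fin d => -(M:ℤ)) (fun _ => (M:ℤ)))
  intro v hv
  have h := hbox hv
  have h2 : ∀ i, |v i| ≤ (M:ℤ) := by
    intro i
    have h3 := h i
    rw [show toR v i = ((v i : ℤ) : ℝ) from rfl] at h3
    have h4 : ((|v i| : ℤ) : ℝ) ≤ ((M : ℤ) : ℝ) := by simpa using h3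
    exact Int.cast_le.mp h4
  constructor <;> intro i
  · exact neg_le_of_abs_le (h2 i)
  · exact le_of_abs_le (h2 i)

/-- Number of lattice points in the hull of `X`: the descent measure. -/
noncomputable def msr (X : Finset (Fin d → ℤ)) : ℕ := (latSet X).ncard

lemma msr_lt {X : Finset (Fin d → ℤ)} {u w : Fin d → ℤ}
    (hu : u ∈ X) (hwX : w ∉ X) (hwhull : toR w ∈ hull X)
    (hnotu : toR u ∉ hull (insert w (X.erase u))) :
    msr (insert w (X.erase u)) < msr X := by
  classical
  apply Set.ncard_lt_ncard _ (latSet_finite X)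
  constructor
  · intro v hv
    have hsub : hull (insert w (X.erase u)) ⊆ hull X := by
      apply hull_subset_hull
      intro x hx
      rcases Finset.mem_insert.1 hx with rfl | hx
      · exact hwhull
      · exact mem_hull_of_mem (Finset.mem_of_mem_erase hx)
    exact hsub hv
  · intro hcon
    exact hnotu (hcon (mem_hull_of_mem hu : toR u ∈ hull X))

/-- The key exchange lemma: if `w = a•x + (1-a)•q` with `q` in a convex set `A` and
`a < 1`, and `x` lies in the hull of `A ∪ {w}`, then `x ∈ A`. -/
lemma exch {A : Set (EuclideanSpace ℝ (Fin d))} (hA : Convex ℝ A)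
    {x w q : EuclideanSpace ℝ (Fin d)} {a : ℝ} (ha0 : 0 ≤ a) (ha1 : a < 1)
    (hq : q ∈ A) (hw : w = a • x + (1 - a) • q)
    (hx : x ∈ convexHull ℝ (insert w A)) : x ∈ A := by
  rw [convexHull_insert ⟨q, hq⟩, mem_convexJoin] at hx
  obtain ⟨w', hw', c, hc, hseg⟩ := hx
  rw [Set.mem_singleton_iff] at hw'
  subst hw'
  rw [hA.convexHull_eq] at hc
  obtain ⟨b, b', hb, hb', hbb, hcomb⟩ := hseg
  rw [hw] at hcomb
  have hab : a * b < 1 := by nlinarith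
  have h2 : (0:ℝ) < 1 - a * b := by linarith
  have key : x = (b * (1 - a) / (1 - a * b)) • q + (b' / (1 - a * b)) • c := by
    ext i
    have hci := congrFun (congrArg WithLp.ofLp hcomb) i
    simp only [PiLp.add_apply, PiLp.smul_apply, smul_eq_mul] at hci ⊢
    rw [div_mul_eq_mul_div, div_mul_eq_mul_div, ← add_div, eq_div_iff h2.ne']
    linear_combination -hci
  rw [key]
  exact hA hq hc (div_nonneg (mul_nonneg hb (by linarith)) h2.le)
    (div_nonneg hb' h2.le)
    (by rw [← add_div, div_eq_one_iff_eq h2.ne']; linear_combination hbb)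

lemma exists_parity_pair {X : Finset (Fin d → ℤ)} (hcard : 2 ^ d < X.card) :
    ∃ x₁ ∈ X, ∃ x₂ ∈ X, x₁ ≠ x₂ ∧ ∃ y : Fin d → ℤ, ∀ i, 2 * y i = x₁ i + x₂ i := by
  classical
  have hmap : ∀ x ∈ X, (fun i => ((x i : ZMod 2))) ∈ (Finset.univ : Finset (Fin d → ZMod 2)) :=
    fun _ _ => Finset.mem_univ _
  have hlt : (Finset.univ : Finset (Fin d → ZMod 2)).card < X.card := by
    rwa [Finset.card_univ, Fintype.card_fun, ZMod.card, Fintype.card_fin]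
  obtain ⟨x₁, hx₁, x₂, hx₂, hne, heq⟩ := Finset.exists_ne_map_eq_of_card_lt_of_maps_to hlt hmap
  refine ⟨x₁, hx₁, x₂, hx₂, hne, fun i => (x₁ i + x₂ i) / 2, fun i => ?_⟩
  apply Int.mul_ediv_cancel'
  have h2 : ((x₁ i - x₂ i : ℤ) : ZMod 2) = 0 := by
    have := congrFun heq i
    push_cast
    rw [this]
    ring
  have hdvd : (2 : ℤ) ∣ x₁ i - x₂ i := by
    exact_mod_cast (ZMod.intCast_zmod_eq_zero_iff_dvd _ 2).1 h2
  have : x₁ i + x₂ i = (x₁ i - x₂ i) + 2 * x₂ i := by ring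
  rw [this]
  exact dvd_add hdvd ⟨x₂ i, rfl⟩

lemma toR_mid {x₁ x₂ y : Fin d → ℤ} (hy : ∀ i, 2 * y i = x₁ i + x₂ i) :
    toR y = (1/2 : ℝ) • toR x₁ + (1/2 : ℝ) • toR x₂ := by
  ext i
  have : ((2 * y i : ℤ) : ℝ) = ((x₁ i + x₂ i : ℤ) : ℝ) := by rw [hy i]
  push_cast at this
  simp only [PiLp.add_apply, PiLp.smul_apply, smul_eq_mul, toR]
  linarith

lemma mid_mem_hull {S : Finset (Fin d → ℤ)} {x₁ x₂ y : Fin d → ℤ}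
    (h1 : x₁ ∈ S) (h2 : x₂ ∈ S) (hy : ∀ i, 2 * y i = x₁ i + x₂ i) :
    toR y ∈ hull S := by
  rw [toR_mid hy]
  exact (convex_convexHull ℝ _) (mem_hull_of_mem h1) (mem_hull_of_mem h2)
    (by norm_num) (by norm_num) (by norm_num)

lemma hull_insert_sub {S : Finset (Fin d → ℤ)} (w : Fin d → ℤ) :
    hull (insert w S) ⊆ convexHull ℝ (insert (toR w) (hull S)) := by
  unfold hull
  rw [coe_insert, Set.image_insert_eq]
  exact convexHull_mono (Set.insert_subset_insert (subset_convexHull ℝ _))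

/-- Exchange, hull form, midpoint version. -/
lemma exch_hull {X : Finset (Fin d → ℤ)} {u q y : Fin d → ℤ} (hq : q ∈ X.erase u)
    (hy : ∀ i, 2 * y i = u i + q i)
    (hmem : toR u ∈ hull (insert y (X.erase u))) : toR u ∈ hull (X.erase u) := by
  apply exch (convex_convexHull ℝ _) (a := 1/2) (by norm_num) (by norm_num)
    (mem_hull_of_mem hq) (by rw [toR_mid hy]; norm_num)
    (hull_insert_sub y hmem)

/-- Exchange, hull form, general version. -/
lemma exch_hull' {X : Finset (Fin d → ℤ)} {u z : Fin d → ℤ} (hu : u ∈ X)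
    (hnonempty : (X.erase u).Nonempty)
    (hzX : toR z ∈ hull X) (hzu : z ≠ u)
    (hmem : toR u ∈ hull (insert z (X.erase u))) : toR u ∈ hull (X.erase u) := by
  classical
  have hX : X = insert u (X.erase u) := (Finset.insert_erase hu).symm
  have hz2 : toR z ∈ convexJoin ℝ {toR u} (convexHull ℝ (toR '' ↑(X.erase u))) := by
    have hcoe : (↑X : Set (Fin d → ℤ)) = insert u ↑(X.erase u) := by
      rw [← coe_insert, Finset.insert_erase hu]
    have : hull X = convexHull ℝ (insert (toR u) (toR '' ↑(X.erase u))) := by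
      unfold hull; rw [hcoe, Set.image_insert_eq]
    rw [this, convexHull_insert] at hzX
    · exact hzX
    · obtain ⟨x, hx⟩ := hnonempty
      exact ⟨toR x, Set.mem_image_of_mem _ (Finset.mem_coe.2 hx)⟩
  rw [mem_convexJoin] at hz2
  obtain ⟨u', hu', c, hc, hseg⟩ := hz2
  rw [Set.mem_singleton_iff] at hu'
  subst hu'
  obtain ⟨a, b, ha, hb, hab, hcomb⟩ := hseg
  have ha1 : a < 1 := by
    rcases lt_or_eq_of_le (show a ≤ 1 by linarith) with h | h
    · exact h
    · exfalso
      have hb0 : b = 0 := by linarith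
      rw [h, hb0, one_smul, zero_smul, add_zero] at hcomb
      exact hzu (toR_inj hcomb.symm)
  exact exch (convex_convexHull ℝ _) ha ha1 hc
    (by rw [← hcomb]; congr 1; rw [show (1:ℝ) - a = b by linarith])
    (hull_insert_sub z hmem)

/-- `v` is in the hull of every `X.erase x`. -/
def Core (X : Finset (Fin d → ℤ)) (v : Fin d → ℤ) : Prop :=
  ∀ x ∈ X, toR v ∈ hull (X.erase x)

lemma caseB {X : Finset (Fin d → ℤ)} {x₁ x₂ y : Fin d → ℤ}
    (hx₁ : x₁ ∈ X) (hx₂ : x₂ ∈ X) (hne : x₁ ≠ x₂)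
    (hy : ∀ i, 2 * y i = x₁ i + x₂ i) (hyX : y ∉ X)
    (hvert : ∀ x ∈ X, toR x ∉ hull (X.erase x))
    (hy1 : toR y ∈ hull (X.erase x₁))
    (hcard : 2 ^ d < X.card)
    (IH : ∀ Y : Finset (Fin d → ℤ), 2 ^ d < Y.card → msr Y < msr X → ∃ v, Core Y v) :
    ∃ v, Core X v := by
  classical
  set X' := insert y (X.erase x₂) with hX'
  have hyXe : y ∉ X.erase x₂ := fun h => hyX (Finset.mem_of_mem_erase h)
  have hXpos : 0 < X.card := lt_of_le_of_lt (Nat.zero_le _) hcard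
  have hcard' : X'.card = X.card := by
    rw [hX', card_insert_of_notMem hyXe, card_erase_of_mem hx₂]
    omega
  have hyseg : ∀ x ∈ X, x ≠ x₁ → x ≠ x₂ → toR y ∈ hull (X.erase x) := by
    intro x hx h1 h2
    exact mid_mem_hull (mem_erase.2 ⟨h1.symm, hx₁⟩) (mem_erase.2 ⟨h2.symm, hx₂⟩) hy
  have hyall : ∀ x ∈ X, x ≠ x₂ → toR y ∈ hull (X.erase x) := by
    intro x hx h2
    by_cases h1 : x = x₁
    · subst h1; exact hy1
    · exact hyseg x hx h1 h2
  have hx₂notin : toR x₂ ∉ hull X' := by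
    intro hmem
    apply hvert x₂ hx₂
    exact exch_hull (mem_erase.2 ⟨hne, hx₁⟩) (fun i => by rw [hy i]; ring) hmem
  have hmlt : msr X' < msr X :=
    msr_lt hx₂ hyX (mid_mem_hull hx₁ hx₂ hy) hx₂notin
  obtain ⟨v, hv⟩ := IH X' (by rwa [hcard']) hmlt
  refine ⟨v, fun x hx => ?_⟩
  by_cases hxx2 : x = x₂
  · subst hxx2
    have := hv y (mem_insert_self _ _)
    rwa [hX', erase_insert hyXe] at this
  · have hxX' : x ∈ X' := mem_insert_of_mem (mem_erase.2 ⟨hxx2, hx⟩)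
    have h := hv x hxX'
    refine hull_subset_hull (fun s hs => ?_) h
    obtain ⟨hsx, hsX'⟩ := mem_erase.1 hs
    rcases mem_insert.1 hsX' with rfl | hsX
    · exact hyall x hx hxx2
    · exact mem_hull_of_mem (mem_erase.2 ⟨hsx, Finset.mem_of_mem_erase hsX⟩)

lemma lemA_aux : ∀ (n : ℕ) (X : Finset (Fin d → ℤ)), msr X ≤ n → 2 ^ d < X.card →
    ∃ v, Core X v := by
  intro n
  induction n with
  | zero =>
    intro X hmsr hcard
    exfalso
    have hne : X.Nonempty := Finset.card_pos.1 (lt_of_le_of_lt (Nat.zero_le _) hcard)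
    obtain ⟨x, hx⟩ := hne
    have : 0 < msr X := by
      rw [msr, Set.ncard_pos (latSet_finite X)]
      exact ⟨x, mem_hull_of_mem hx⟩
    omega
  | succ n ih =>
    intro X hmsr hcard
    classical
    have IH : ∀ Y : Finset (Fin d → ℤ), 2 ^ d < Y.card → msr Y < msr X → ∃ v, Core Y v :=
      fun Y hYc hYlt => ih Y (by omega) hYc
    -- Case 1: some point is in the hull of the others
    by_cases hred : ∃ x ∈ X, toR x ∈ hull (X.erase x)
    · obtain ⟨x, hx, hmem⟩ := hred
      refine ⟨x, fun x' hx' => ?_⟩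
      by_cases h : x' = x
      · subst h; exact hmem
      · exact mem_hull_of_mem (mem_erase.2 ⟨Ne.symm h, hx⟩)
    push_neg at hred
    -- Pigeonhole: a same-parity pair
    obtain ⟨x₁, hx₁, x₂, hx₂, hne, y, hy⟩ := exists_parity_pair hcard
    have hyseg : ∀ x ∈ X, x ≠ x₁ → x ≠ x₂ → toR y ∈ hull (X.erase x) := by
      intro x hx h1 h2
      exact mid_mem_hull (mem_erase.2 ⟨h1.symm, hx₁⟩) (mem_erase.2 ⟨h2.symm, hx₂⟩) hy
    have hyne1 : y ≠ x₁ := by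
      intro h
      apply hne
      funext i
      have := hy i
      rw [h] at this
      omega
    have hyne2 : y ≠ x₂ := by
      intro h
      apply hne
      funext i
      have := hy i
      rw [h] at this
      omega
    -- Case: y is itself a member of X
    by_cases hyX : y ∈ X
    · refine ⟨y, fun x hx => ?_⟩
      by_cases h1 : x = x₁
      · subst h1; exact mem_hull_of_mem (mem_erase.2 ⟨hyne1, hyX⟩)
      by_cases h2 : x = x₂
      · subst h2; exact mem_hull_of_mem (mem_erase.2 ⟨hyne2, hyX⟩)
      · exact hyseg x hx h1 h2
    by_cases hy1 : toR y ∈ hull (X.erase x₁) <;>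
      by_cases hy2 : toR y ∈ hull (X.erase x₂)
    · -- y in both: y is the core point
      refine ⟨y, fun x hx => ?_⟩
      by_cases h1 : x = x₁
      · subst h1; exact hy1
      by_cases h2 : x = x₂
      · subst h2; exact hy2
      · exact hyseg x hx h1 h2
    · -- y ∈ hull (X.erase x₁) only: replace x₂
      exact caseB hx₁ hx₂ hne hy hyX hred hy1 hcard IH
    · -- y ∈ hull (X.erase x₂) only: replace x₁ (swap roles)
      exact caseB hx₂ hx₁ hne.symm (fun i => by rw [hy i]; ring) hyX hred hy2 hcard IH
    · -- Case C: y in neither hull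
      set X' := insert y (X.erase x₁) with hX'
      have hyXe : y ∉ X.erase x₁ := fun h => hyX (Finset.mem_of_mem_erase h)
      have hXpos : 0 < X.card := lt_of_le_of_lt (Nat.zero_le _) hcard
      have hcard' : X'.card = X.card := by
        rw [hX', card_insert_of_notMem hyXe, card_erase_of_mem hx₁]
        omega
      have hx₁notin : toR x₁ ∉ hull X' := by
        intro hmem
        exact hred x₁ hx₁ (exch_hull (mem_erase.2 ⟨hne.symm, hx₂⟩) hy hmem)
      obtain ⟨v₀, hv₀⟩ := IH X' (by rwa [hcard'])
        (msr_lt hx₁ hyX (mid_mem_hull hx₁ hx₂ hy) hx₁notin)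
      have F1 : toR v₀ ∈ hull (X.erase x₁) := by
        have := hv₀ y (mem_insert_self _ _)
        rwa [hX', erase_insert hyXe] at this
      have F2 : ∀ x ∈ X, x ≠ x₁ → x ≠ x₂ → toR v₀ ∈ hull (X.erase x) := by
        intro x hx h1 h2
        have hxX' : x ∈ X' := mem_insert_of_mem (mem_erase.2 ⟨h1, hx⟩)
        refine hull_subset_hull (fun s hs => ?_) (hv₀ x hxX')
        obtain ⟨hsx, hsX'⟩ := mem_erase.1 hs
        rcases mem_insert.1 hsX' with rfl | hsX
        · exact hyseg x hx h1 h2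
        · exact mem_hull_of_mem (mem_erase.2 ⟨hsx, Finset.mem_of_mem_erase hsX⟩)
      have hv₀x₂ : v₀ ≠ x₂ := by
        intro h
        have hx₂X' : x₂ ∈ X' := mem_insert_of_mem (mem_erase.2 ⟨hne.symm, hx₂⟩)
        have h2 := hv₀ x₂ hx₂X'
        rw [h] at h2
        have hsub : hull (X'.erase x₂) ⊆ hull (insert y (X.erase x₂)) := by
          apply hull_mono
          intro s hs
          obtain ⟨hsx, hsX'⟩ := mem_erase.1 hs
          rcases mem_insert.1 hsX' with rfl | hsX
          · exact mem_insert_self _ _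
          · exact mem_insert_of_mem (mem_erase.2 ⟨hsx, Finset.mem_of_mem_erase hsX⟩)
        have h3 := hsub h2
        exact hred x₂ hx₂
          (exch_hull (mem_erase.2 ⟨hne, hx₁⟩) (fun i => by rw [hy i]; ring) h3)
      by_cases hv₀2 : toR v₀ ∈ hull (X.erase x₂)
      · refine ⟨v₀, fun x hx => ?_⟩
        by_cases h1 : x = x₁
        · subst h1; exact F1
        by_cases h2 : x = x₂
        · subst h2; exact hv₀2
        · exact F2 x hx h1 h2
      · -- second descent with the new point v₀
        have hv₀X : v₀ ∉ X := by
          intro h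
          by_cases h2 : v₀ = x₂
          · exact hv₀x₂ h2
          · exact hv₀2 (mem_hull_of_mem (mem_erase.2 ⟨h2, h⟩))
        have hv₀hullX : toR v₀ ∈ hull X :=
          hull_mono (Finset.erase_subset _ _) F1
        set X₃ := insert v₀ (X.erase x₂) with hX₃
        have hv₀Xe : v₀ ∉ X.erase x₂ := fun h => hv₀X (Finset.mem_of_mem_erase h)
        have hcard₃ : X₃.card = X.card := by
          rw [hX₃, card_insert_of_notMem hv₀Xe, card_erase_of_mem hx₂]
          omega
        have hErNe : (X.erase x₂).Nonempty := by
          refine Finset.card_pos.1 ?_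
          rw [card_erase_of_mem hx₂]
          have : 1 ≤ 2 ^ d := Nat.one_le_two_pow
          omega
        have hx₂notin₃ : toR x₂ ∉ hull X₃ := by
          intro hmem
          exact hred x₂ hx₂ (exch_hull' hx₂ hErNe hv₀hullX hv₀x₂ hmem)
        obtain ⟨v, hv⟩ := IH X₃ (by rwa [hcard₃])
          (msr_lt hx₂ hv₀X hv₀hullX hx₂notin₃)
        refine ⟨v, fun x hx => ?_⟩
        by_cases h2 : x = x₂
        · subst h2
          have := hv v₀ (mem_insert_self _ _)
          rwa [hX₃, erase_insert hv₀Xe] at this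
        · have hxX₃ : x ∈ X₃ := mem_insert_of_mem (mem_erase.2 ⟨h2, hx⟩)
          refine hull_subset_hull (fun s hs => ?_) (hv x hxX₃)
          obtain ⟨hsx, hsX₃⟩ := mem_erase.1 hs
          rcases mem_insert.1 hsX₃ with rfl | hsX
          · by_cases h1 : x = x₁
            · subst h1; exact F1
            · exact F2 x hx h1 h2
          · exact mem_hull_of_mem (mem_erase.2 ⟨hsx, Finset.mem_of_mem_erase hsX⟩)

lemma lemA (X : Finset (Fin d → ℤ)) (hcard : 2 ^ d < X.card) : ∃ v, Core X v :=
  lemA_aux (msr X) X le_rfl hcard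

end DoignonProof

/-- Doignon's theorem: if every at most `2^d` members of a finite family of
convex sets in `ℝ^d` have a common integer point, then the whole family has a
common integer point. -/
theorem doignon (d : ℕ) (F : Finset (Set (EuclideanSpace ℝ (Fin d))))
    (hconv : ∀ K ∈ F, Convex ℝ K)
    (hint : ∀ G ⊆ F, G.card ≤ 2 ^ d →
      ∃ z : EuclideanSpace ℝ (Fin d), (∀ i : Fin d, ∃ m : ℤ, z i = (m : ℝ)) ∧ ∀ K ∈ G, z ∈ K) :
    ∃ z : EuclideanSpace ℝ (Fin d),
      (∀ i : Fin d, ∃ m : ℤ, z i = (m : ℝ)) ∧ ∀ K ∈ F, z ∈ K := by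
  classical
  open DoignonProof in
  revert hconv hint
  induction F using Finset.strongInductionOn with
  | _ F ih =>
    intro hconv hint
    by_cases hsmall : F.card ≤ 2 ^ d
    · exact hint F Finset.Subset.rfl hsmall
    push_neg at hsmall
    have hwit : ∀ K : {K // K ∈ F}, ∃ v : Fin d → ℤ,
        ∀ L ∈ F.erase K.1, DoignonProof.toR v ∈ L := by
      rintro ⟨K, hK⟩
      obtain ⟨z, hzint, hzmem⟩ := ih (F.erase K) (Finset.erase_ssubset hK)
        (fun L hL => hconv L (Finset.mem_of_mem_erase hL))
        (fun G hG hGc => hint G (hG.trans (Finset.erase_subset _ _)) hGc)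
      choose m hm using hzint
      refine ⟨m, fun L hL => ?_⟩
      have hzm : DoignonProof.toR m = z := by
        ext i
        exact (hm i).symm
      rw [hzm]
      exact hzmem L hL
    choose w hw using hwit
    by_cases hinj : Function.Injective w
    · set X : Finset (Fin d → ℤ) := Finset.univ.image w with hX
      have hcardX : X.card = F.card := by
        rw [hX, Finset.card_image_of_injective _ hinj, Finset.card_univ, Fintype.card_coe]
      obtain ⟨v, hv⟩ := DoignonProof.lemA X (by rwa [hcardX])
      refine ⟨DoignonProof.toR v, fun i => ⟨v i, rfl⟩, fun K hK => ?_⟩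
      have hwK : w ⟨K, hK⟩ ∈ X := Finset.mem_image_of_mem w (Finset.mem_univ _)
      refine DoignonProof.hull_subset_of_forall (hconv K hK) (fun x hx => ?_) (hv _ hwK)
      obtain ⟨hxne, hxX⟩ := Finset.mem_erase.1 hx
      obtain ⟨K', _, rfl⟩ := Finset.mem_image.1 hxX
      have hKK' : K ≠ K'.1 := by
        intro h
        exact hxne (congrArg w (Subtype.ext h.symm))
      exact hw K' K (Finset.mem_erase.2 ⟨hKK', hK⟩)
    · rw [Function.not_injective_iff] at hinj
      obtain ⟨K₁, K₂, heq, hne⟩ := hinj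
      have hvalne : K₁.1 ≠ K₂.1 := fun h => hne (Subtype.ext h)
      refine ⟨DoignonProof.toR (w K₁), fun i => ⟨w K₁ i, rfl⟩, fun L hL => ?_⟩
      by_cases h : L = K₁.1
      · rw [heq]
        exact hw K₂ L (Finset.mem_erase.2 ⟨fun hh => hvalne (h.symm.trans hh), hL⟩)
      · exact hw K₁ L (Finset.mem_erase.2 ⟨h, hL⟩)
end

section
/- Let G be a finite tree on n vertices and U a set of 2k vertices of G. Then there exists a partition of U into k pairs {u_i, v_i} and a vertex p of G such that p lies on the (unique) path between u_i and v_i for every i. Consequently, the geodesic convex hulls of the k pairs have a common vertex. -/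
open scoped Classical

namespace TreeTverberg

open SimpleGraph

/-- `takeUntil` preserves the second vertex. -/
lemma getVert_one_takeUntil {V : Type*} [DecidableEq V] {G : SimpleGraph V}
    {v w : V} (p : G.Walk v w) {x : V} (hx : x ∈ p.support) (hne : x ≠ v) :
    (p.takeUntil x hx).getVert 1 = p.getVert 1 := by
  cases p with
  | nil =>
    simp [Walk.mem_support_nil_iff] at hx
    exact absurd hx hne
  | cons r q =>
    simp only [Walk.takeUntil]
    rw [dif_neg (fun h => hne h.symm)]
    simp [Walk.getVert_cons_succ, Walk.getVert_zero]



lemma pairing_lemma {V : Type*} [DecidableEq V] (p : V) (dir : V → V) :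
    ∀ (k : ℕ) (s : Multiset V), Multiset.card s = 2 * k →
      (∀ d : V, Multiset.card (s.filter (fun u => u ≠ p ∧ dir u = d)) ≤ k) →
      ∃ l : List (V × V), l.length = k ∧
        (l.map (fun q => ({q.1, q.2} : Multiset V))).sum = s ∧
        ∀ q ∈ l, q.1 = p ∨ q.2 = p ∨ dir q.1 ≠ dir q.2 := by
  intro k
  induction k with
  | zero =>
    intro s hs _
    refine ⟨[], rfl, ?_, by simp⟩
    simp [Multiset.card_eq_zero.mp (by simpa using hs)]
  | succ k ih =>
    intro s hcard hbound
    have finish : ∀ (x y : V) (s2 : Multiset V), s = x ::ₘ y ::ₘ s2 →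
        (x = p ∨ y = p ∨ dir x ≠ dir y) →
        (∀ d : V, Multiset.card (s2.filter (fun u => u ≠ p ∧ dir u = d)) ≤ k) →
        ∃ l : List (V × V), l.length = k + 1 ∧
          (l.map (fun q => ({q.1, q.2} : Multiset V))).sum = s ∧
          ∀ q ∈ l, q.1 = p ∨ q.2 = p ∨ dir q.1 ≠ dir q.2 := by
      intro x y s2 hs hok hb
      have hcard2 : Multiset.card s2 = 2 * k := by
        have := hcard; rw [hs] at this; simp at this; omega
      obtain ⟨l, hlen, hsum, hokl⟩ := ih s2 hcard2 hb
      refine ⟨(x, y) :: l, by simp [hlen], ?_, ?_⟩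
      · rw [hs]
        simp only [List.map_cons, List.sum_cons, hsum]
        simp [Multiset.insert_eq_cons, Multiset.cons_add]
      · intro q hq
        rcases List.mem_cons.mp hq with h | h
        · subst h; exact hok
        · exact hokl q h
    by_cases hA : ∃ d, Multiset.card (s.filter (fun u => u ≠ p ∧ dir u = d)) = k + 1
    · obtain ⟨d, hd⟩ := hA
      obtain ⟨x, hx⟩ : ∃ x, x ∈ s.filter (fun u => u ≠ p ∧ dir u = d) :=
        Multiset.card_pos_iff_exists_mem.mp (by omega)
      have hxs : x ∈ s := (Multiset.mem_filter.mp hx).1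
      have hxQ : x ≠ p ∧ dir x = d := (Multiset.mem_filter.mp hx).2
      obtain ⟨s1, hs1⟩ := Multiset.exists_cons_of_mem hxs
      have hnotcard : Multiset.card (s.filter (fun u => ¬(u ≠ p ∧ dir u = d))) = k + 1 := by
        have h2 := congrArg Multiset.card
          (Multiset.filter_add_not (fun u => u ≠ p ∧ dir u = d) s)
        rw [Multiset.card_add] at h2
        omega
      have hfilt_s1 : s.filter (fun u => ¬(u ≠ p ∧ dir u = d))
          = s1.filter (fun u => ¬(u ≠ p ∧ dir u = d)) := by
        rw [hs1, Multiset.filter_cons_of_neg _ (by simpa using hxQ)]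
      obtain ⟨y, hy⟩ : ∃ y, y ∈ s1.filter (fun u => ¬(u ≠ p ∧ dir u = d)) :=
        Multiset.card_pos_iff_exists_mem.mp (by rw [← hfilt_s1]; omega)
      have hys1 : y ∈ s1 := (Multiset.mem_filter.mp hy).1
      have hyQ : ¬(y ≠ p ∧ dir y = d) := (Multiset.mem_filter.mp hy).2
      obtain ⟨s2, hs2⟩ := Multiset.exists_cons_of_mem hys1
      have hs : s = x ::ₘ y ::ₘ s2 := by rw [hs1, hs2]
      refine finish x y s2 hs ?_ ?_
      · rcases Classical.em (y = p) with h | h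
        · exact Or.inr (Or.inl h)
        · refine Or.inr (Or.inr ?_)
          rw [hxQ.2]
          intro hcontr
          exact hyQ ⟨h, hcontr.symm⟩
      · intro d'
        by_cases hdd : d' = d
        · subst hdd
          have hthis : Multiset.card
              ((x ::ₘ y ::ₘ s2).filter (fun u => u ≠ p ∧ dir u = d')) = k + 1 := hs ▸ hd
          rw [Multiset.filter_cons_of_pos (p := fun u => u ≠ p ∧ dir u = d') _ hxQ,
            Multiset.filter_cons_of_neg (p := fun u => u ≠ p ∧ dir u = d') _ hyQ] at hthis
          rw [Multiset.card_cons] at hthis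
          omega
        · have hdisj : ∀ u, (u ≠ p ∧ dir u = d') → ¬(u ≠ p ∧ dir u = d) := by
            rintro u ⟨hup, hdir⟩ ⟨_, hdir'⟩
            exact hdd (hdir ▸ hdir'.symm ▸ rfl)
          have hle : s.filter (fun u => u ≠ p ∧ dir u = d')
              ≤ s.filter (fun u => ¬(u ≠ p ∧ dir u = d)) :=
            Multiset.monotone_filter_right s hdisj
          have hcle : Multiset.card (s.filter (fun u => u ≠ p ∧ dir u = d')) ≤ k + 1 := by
            have := Multiset.card_le_card hle; omega
          rcases Nat.lt_or_ge
            (Multiset.card (s.filter (fun u => u ≠ p ∧ dir u = d'))) (k + 1) with hlt | hge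
          · have hsub : s2 ≤ s := by
              rw [hs]
              exact le_trans (Multiset.le_cons_self _ _) (Multiset.le_cons_self _ _)
            have hmono := Multiset.card_le_card
              (Multiset.filter_le_filter (fun u => u ≠ p ∧ dir u = d') hsub)
            have hsplit : Multiset.card
                ((x ::ₘ y ::ₘ s2).filter (fun u => u ≠ p ∧ dir u = d'))
                = Multiset.card (s.filter (fun u => u ≠ p ∧ dir u = d')) := by rw [hs]
            omega
          · have heqc : Multiset.card (s.filter (fun u => u ≠ p ∧ dir u = d')) = k + 1 :=
              le_antisymm hcle hge
            have heq : s.filter (fun u => u ≠ p ∧ dir u = d')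
                = s.filter (fun u => ¬(u ≠ p ∧ dir u = d)) := by
              apply Multiset.eq_of_le_of_card_le hle
              omega
            have hyQ' : y ≠ p ∧ dir y = d' := by
              have hmem : y ∈ s.filter (fun u => ¬(u ≠ p ∧ dir u = d)) :=
                Multiset.mem_filter.mpr
                  ⟨by rw [hs1]; exact Multiset.mem_cons_of_mem hys1, hyQ⟩
              rw [← heq] at hmem
              exact (Multiset.mem_filter.mp hmem).2
            have hxQ' : ¬(x ≠ p ∧ dir x = d') := fun h => hdisj x h hxQ
            have hthis : Multiset.card
                ((x ::ₘ y ::ₘ s2).filter (fun u => u ≠ p ∧ dir u = d')) = k + 1 := hs ▸ heqc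
            rw [Multiset.filter_cons_of_neg (p := fun u => u ≠ p ∧ dir u = d') _ hxQ',
              Multiset.filter_cons_of_pos (p := fun u => u ≠ p ∧ dir u = d') _ hyQ'] at hthis
            rw [Multiset.card_cons] at hthis
            omega
    · push_neg at hA
      have hball : ∀ d, Multiset.card (s.filter (fun u => u ≠ p ∧ dir u = d)) ≤ k := by
        intro d
        have h1 := hbound d
        have h2 := hA d
        omega
      obtain ⟨x, hxs⟩ : ∃ x, x ∈ s := Multiset.card_pos_iff_exists_mem.mp (by omega)
      obtain ⟨s1, hs1⟩ := Multiset.exists_cons_of_mem hxs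
      have hbnds2 : ∀ (y : V) (s2 : Multiset V), s = x ::ₘ y ::ₘ s2 →
          ∀ d : V, Multiset.card (s2.filter (fun u => u ≠ p ∧ dir u = d)) ≤ k := by
        intro y s2 hs d
        have hsub : s2 ≤ s := by
          rw [hs]
          exact le_trans (Multiset.le_cons_self _ _) (Multiset.le_cons_self _ _)
        have := Multiset.card_le_card
          (Multiset.filter_le_filter (fun u => u ≠ p ∧ dir u = d) hsub)
        exact le_trans this (hball d)
      by_cases hxp : x = p
      · obtain ⟨y, hys1⟩ : ∃ y, y ∈ s1 := by
          apply Multiset.card_pos_iff_exists_mem.mp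
          have : Multiset.card s = Multiset.card s1 + 1 := by rw [hs1]; simp
          omega
        obtain ⟨s2, hs2⟩ := Multiset.exists_cons_of_mem hys1
        have hs : s = x ::ₘ y ::ₘ s2 := by rw [hs1, hs2]
        exact finish x y s2 hs (Or.inl hxp) (hbnds2 y s2 hs)
      · have hxQ : x ≠ p ∧ dir x = dir x := ⟨hxp, rfl⟩
        have hnotcard : Multiset.card (s.filter (fun u => ¬(u ≠ p ∧ dir u = dir x))) ≥ k + 2 := by
          have h2 := congrArg Multiset.card
            (Multiset.filter_add_not (fun u => u ≠ p ∧ dir u = dir x) s)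
          rw [Multiset.card_add] at h2
          have := hball (dir x)
          omega
        have hfilt_s1 : s.filter (fun u => ¬(u ≠ p ∧ dir u = dir x))
            = s1.filter (fun u => ¬(u ≠ p ∧ dir u = dir x)) := by
          rw [hs1, Multiset.filter_cons_of_neg _ (by simpa using hxQ)]
        obtain ⟨y, hy⟩ : ∃ y, y ∈ s1.filter (fun u => ¬(u ≠ p ∧ dir u = dir x)) :=
          Multiset.card_pos_iff_exists_mem.mp (by rw [← hfilt_s1]; omega)
        have hys1 : y ∈ s1 := (Multiset.mem_filter.mp hy).1
        have hyQ : ¬(y ≠ p ∧ dir y = dir x) := (Multiset.mem_filter.mp hy).2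
        obtain ⟨s2, hs2⟩ := Multiset.exists_cons_of_mem hys1
        have hs : s = x ::ₘ y ::ₘ s2 := by rw [hs1, hs2]
        refine finish x y s2 hs ?_ (hbnds2 y s2 hs)
        rcases Classical.em (y = p) with h | h
        · exact Or.inr (Or.inl h)
        · exact Or.inr (Or.inr fun hcontr => hyQ ⟨h, hcontr.symm⟩)


end TreeTverberg

/-- Tverberg for trees: a set `U` of `2k` vertices of a finite tree can be
partitioned into `k` pairs whose (unique) connecting paths all pass through a
common vertex `p`. -/
theorem tree_tverberg_pairs {V : Type*} [Fintype V] [DecidableEq V]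
    (G : SimpleGraph V) (hconn : G.Connected) (hacyclic : G.IsAcyclic)
    (k : ℕ) (hk : 1 ≤ k) (U : Finset V) (hU : U.card = 2 * k) :
    ∃ (p : V) (f : Fin k → V × V),
      ((Finset.univ.val.bind fun i : Fin k => {(f i).1, (f i).2}) = U.val) ∧
      ∀ i : Fin k, ∃ w : G.Walk (f i).1 (f i).2, w.IsPath ∧ p ∈ w.support := by
  classical
  choose P hPp hPl using fun u v : V => hconn.exists_path_of_dist u v
  have puniq : ∀ (u v : V) (w : G.Walk u v), w.IsPath → w = P u v := by
    intro u v w hw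
    exact congrArg Subtype.val (hacyclic.path_unique ⟨w, hw⟩ ⟨P u v, hPp u v⟩)
  -- choose a median vertex p minimizing the total distance to U
  obtain ⟨u0, hu0⟩ := Finset.card_pos.mp (by omega : 0 < U.card)
  obtain ⟨p, -, hmin⟩ := Finset.exists_min_image Finset.univ
    (fun q => ∑ u ∈ U, G.dist q u) ⟨u0, Finset.mem_univ u0⟩
  set dir : V → V := fun u => (P p u).getVert 1 with hdir
  have hnn : ∀ u : V, u ≠ p → ¬(P p u).Nil := by
    intro u hu
    rw [SimpleGraph.Walk.not_nil_iff_lt_length, hPl p u]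
    exact hconn.pos_dist_of_ne (Ne.symm hu)
  have hadj : ∀ u : V, u ≠ p → G.Adj p (dir u) := by
    intro u hu
    simp only [hdir]
    exact SimpleGraph.Walk.adj_snd (hnn u hu)
  have hdec : ∀ u : V, u ≠ p → G.dist (dir u) u + 1 = G.dist p u := by
    intro u hu
    have h1 : G.dist (dir u) u ≤ (P p u).tail.length := by
      simp only [hdir]
      exact SimpleGraph.dist_le _
    have h2 : (P p u).tail.length + 1 = (P p u).length :=
      SimpleGraph.Walk.length_tail_add_one (hnn u hu)
    have h3 : G.dist p (dir u) = 1 :=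
      (SimpleGraph.dist_eq_one_iff_adj).mpr (hadj u hu)
    have h4 : G.dist p u ≤ G.dist p (dir u) + G.dist (dir u) u := hconn.dist_triangle
    rw [hPl p u] at h2
    omega
  have hinc : ∀ d u : V, G.Adj p d → G.dist d u ≤ G.dist p u + 1 := by
    intro d u hd
    have h1 : G.dist d u ≤ G.dist d p + G.dist p u := hconn.dist_triangle
    have h2 : G.dist d p = 1 := (SimpleGraph.dist_eq_one_iff_adj).mpr hd.symm
    omega
  -- the median property: every direction class of U has at most k elements
  have hclass : ∀ d : V, (U.filter (fun u => u ≠ p ∧ dir u = d)).card ≤ k := by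
    intro d
    by_contra hcon
    push_neg at hcon
    have hAB : (U.filter (fun u => u ≠ p ∧ dir u = d)).card
        + (U.filter (fun u => ¬(u ≠ p ∧ dir u = d))).card = 2 * k := by
      rw [Finset.card_filter_add_card_filter_not]; exact hU
    obtain ⟨w0, hw0⟩ := Finset.card_pos.mp
      (by omega : 0 < (U.filter (fun u => u ≠ p ∧ dir u = d)).card)
    have hw0' := (Finset.mem_filter.mp hw0).2
    have hdadj : G.Adj p d := hw0'.2 ▸ hadj w0 hw0'.1
    have hSA : (∑ u ∈ U.filter (fun u => u ≠ p ∧ dir u = d), G.dist d u)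
        + (U.filter (fun u => u ≠ p ∧ dir u = d)).card
        = ∑ u ∈ U.filter (fun u => u ≠ p ∧ dir u = d), G.dist p u := by
      have h0 : ∑ u ∈ U.filter (fun u => u ≠ p ∧ dir u = d), (G.dist d u + 1)
          = ∑ u ∈ U.filter (fun u => u ≠ p ∧ dir u = d), G.dist p u := by
        refine Finset.sum_congr rfl ?_
        intro u hu
        have h := (Finset.mem_filter.mp hu).2
        rw [← h.2]
        exact hdec u h.1
      rwa [Finset.sum_add_distrib, Finset.sum_const, smul_eq_mul, mul_one] at h0
    have hSB : ∑ u ∈ U.filter (fun u => ¬(u ≠ p ∧ dir u = d)), G.dist d u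
        ≤ (∑ u ∈ U.filter (fun u => ¬(u ≠ p ∧ dir u = d)), G.dist p u)
        + (U.filter (fun u => ¬(u ≠ p ∧ dir u = d))).card := by
      have h0 : ∑ u ∈ U.filter (fun u => ¬(u ≠ p ∧ dir u = d)), G.dist d u
          ≤ ∑ u ∈ U.filter (fun u => ¬(u ≠ p ∧ dir u = d)), (G.dist p u + 1) :=
        Finset.sum_le_sum (fun u _ => hinc d u hdadj)
      rwa [Finset.sum_add_distrib, Finset.sum_const, smul_eq_mul, mul_one] at h0
    have hsplit1 : (∑ u ∈ U.filter (fun u => u ≠ p ∧ dir u = d), G.dist p u)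
        + (∑ u ∈ U.filter (fun u => ¬(u ≠ p ∧ dir u = d)), G.dist p u)
        = ∑ u ∈ U, G.dist p u :=
      Finset.sum_filter_add_sum_filter_not U _ _
    have hsplit2 : (∑ u ∈ U.filter (fun u => u ≠ p ∧ dir u = d), G.dist d u)
        + (∑ u ∈ U.filter (fun u => ¬(u ≠ p ∧ dir u = d)), G.dist d u)
        = ∑ u ∈ U, G.dist d u :=
      Finset.sum_filter_add_sum_filter_not U _ _
    have hmind := hmin d (Finset.mem_univ d)
    omega
  -- crossing lemma: two paths from p sharing a vertex other than p have the
  -- same initial direction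
  have hcross : ∀ u v x : V, x ≠ p → (hxu : x ∈ (P p u).support) →
      (hxv : x ∈ (P p v).support) → dir u = dir v := by
    intro u v x hxp hxu hxv
    have h1 : (P p u).takeUntil x hxu = P p x := puniq _ _ _ ((hPp p u).takeUntil hxu)
    have h2 : (P p v).takeUntil x hxv = P p x := puniq _ _ _ ((hPp p v).takeUntil hxv)
    have g1 := TreeTverberg.getVert_one_takeUntil (P p u) hxu hxp
    have g2 := TreeTverberg.getVert_one_takeUntil (P p v) hxv hxp
    simp only [hdir]
    rw [← g1, ← g2, h1, h2]
  -- construction of the connecting path through p for a good pair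
  have hwalk : ∀ u v : V, (u = p ∨ v = p ∨ dir u ≠ dir v) →
      ∃ w : G.Walk u v, w.IsPath ∧ p ∈ w.support := by
    intro u v hok
    by_cases hup : u = p
    · subst hup
      exact ⟨P u v, hPp u v, SimpleGraph.Walk.start_mem_support _⟩
    · by_cases hvp : v = p
      · subst hvp
        refine ⟨(P v u).reverse, (hPp v u).reverse, ?_⟩
        rw [SimpleGraph.Walk.support_reverse]
        exact List.mem_reverse.mpr (SimpleGraph.Walk.start_mem_support _)
      · have hdd : dir u ≠ dir v := by tauto
        refine ⟨(P p u).reverse.append (P p v), ?_, ?_⟩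
        · rw [SimpleGraph.Walk.isPath_def, SimpleGraph.Walk.support_append]
          apply List.Nodup.append
          · rw [SimpleGraph.Walk.support_reverse]
            exact List.nodup_reverse.mpr ((hPp p u).support_nodup)
          · exact ((hPp p v).support_nodup).sublist (List.tail_sublist _)
          · intro x hx1 hx2
            have hxu : x ∈ (P p u).support := by
              rw [SimpleGraph.Walk.support_reverse] at hx1
              exact List.mem_reverse.mp hx1
            have hxv : x ∈ (P p v).support := List.mem_of_mem_tail hx2
            by_cases hxp : x = p
            · have hnd := (hPp p v).support_nodup
              rw [SimpleGraph.Walk.support_eq_cons] at hnd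
              exact (List.nodup_cons.mp hnd).1 (hxp ▸ hx2)
            · exact hdd (hcross u v x hxp hxu hxv)
        · rw [SimpleGraph.Walk.mem_support_append_iff]
          left
          rw [SimpleGraph.Walk.support_reverse]
          exact List.mem_reverse.mpr (SimpleGraph.Walk.start_mem_support _)
  -- apply the pairing lemma
  have hUcard : Multiset.card U.val = 2 * k := by
    rw [← Finset.card_def]; exact hU
  have hclassM : ∀ d : V, Multiset.card (U.val.filter (fun u => u ≠ p ∧ dir u = d)) ≤ k := by
    intro d
    have h := hclass d
    rwa [Finset.card_def, Finset.filter_val] at h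
  obtain ⟨l, hlen, hsum, hok⟩ := TreeTverberg.pairing_lemma p dir k U.val hUcard hclassM
  refine ⟨p, fun i => l.get (Fin.cast hlen.symm i), ?_, ?_⟩
  · have h1 : (Finset.univ.val.bind fun i : Fin k =>
        ({(l.get (Fin.cast hlen.symm i)).1, (l.get (Fin.cast hlen.symm i)).2} : Multiset V))
        = ∑ i : Fin k,
          ({(l.get (Fin.cast hlen.symm i)).1, (l.get (Fin.cast hlen.symm i)).2} : Multiset V) := by
      rfl
    rw [h1]
    have h2 : ∑ i : Fin k,
        ({(l.get (Fin.cast hlen.symm i)).1, (l.get (Fin.cast hlen.symm i)).2} : Multiset V)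
        = ∑ j : Fin l.length, ({(l.get j).1, (l.get j).2} : Multiset V) := by
      refine Fintype.sum_equiv (finCongr hlen.symm) _ _ ?_
      intro j
      simp
    rw [h2, ← List.sum_ofFn]
    have h3 : l.map (fun q => ({q.1, q.2} : Multiset V))
        = List.ofFn ((fun q => ({q.1, q.2} : Multiset V)) ∘ l.get) := by
      rw [← List.map_ofFn, List.ofFn_get]
    rw [h3] at hsum
    exact hsum
  · intro i
    exact hwalk _ _ (hok _ (List.get_mem l _))
end
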